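/- arXiv:1204.3071 — 4 statements merged into one kernel-verified Lean document; each statement's English description precedes it below -/
import Mathlib

section
/- Let f be a continuously differentiable interval map and ν an f-invariant Borel probability measure. If for ν-almost every x we have (1/n)·S_n(φ)(x) → A < 0 where φ = max(ln|Df|, −L) for some L > 0 and S_n(φ) = φ + φ∘f + ... + φ∘f^{n−1}, then for ν-almost every x there exist τ > 0 and N such that for all n ≥ N and all y ∈ B(x, τ) we have |Df^n(y)| ≤ exp(−nχ), where χ = −A/4. -/
open MeasureTheory Metric Set Filter

lemma deriv_iterate_eq_prod (f : ℝ → ℝ) (hf : Differentiable ℝ f) (n : ℕ) (y : ℝ) :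
    deriv (f^[n]) y = ∏ i ∈ Finset.range n, deriv f (f^[i] y) := by
  induction n with
  | zero => simp
  | succ n ih =>
    rw [Function.iterate_succ']
    rw [deriv_comp y hf.differentiableAt ((hf.iterate n).differentiableAt)]
    rw [Finset.prod_range_succ, ih]
    ring

/-- If the Birkhoff averages of `φ = max(ln|Df|, -L)` converge ν-a.e. to
`A = ∫ φ dν < 0`, then ν-a.e. point `x` admits `τ > 0` and `N` such that for all `n ≥ N`
and all `y` in the ball `B(x,τ)` (inside the interval) we have `|Df^n(y)| ≤ exp(-nχ)`
with `χ = -A/4`. -/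
theorem birkhoff_neg_implies_local_contraction
    (a b : ℝ) (hab : a < b) (f : ℝ → ℝ)
    (hf : ContDiff ℝ 1 f) (hmaps : MapsTo f (Icc a b) (Icc a b))
    (ν : Measure ℝ) (hprob : IsProbabilityMeasure ν) (hsupp : ν (Icc a b)ᶜ = 0)
    (hinv : MeasurePreserving f ν ν)
    (L : ℝ) (hL : 0 < L) (A : ℝ) (hA : A < 0)
    (hAint : A = ∫ x, max (Real.log |deriv f x|) (-L) ∂ν)
    (hbirk : ∀ᵐ x ∂ν, Tendsto
      (fun n : ℕ => (1 / (n : ℝ)) *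
        ∑ i ∈ Finset.range n, max (Real.log |deriv f (f^[i] x)|) (-L))
      atTop (nhds A)) :
    ∀ᵐ x ∂ν, ∃ τ > (0 : ℝ), ∃ N : ℕ, ∀ n ≥ N, ∀ y ∈ Metric.ball x τ ∩ Icc a b,
      |deriv (f^[n]) y| ≤ Real.exp (-(n : ℝ) * (-A / 4)) := by
  have hfd : Differentiable ℝ f := hf.differentiable one_ne_zero
  have hdc : Continuous (deriv f) := hf.continuous_deriv le_rfl
  set ψ : ℝ → ℝ := fun z => max (Real.log (max |deriv f z| (Real.exp (-L - 1)))) (-L)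
    with hψdef
  have hmaxpos : ∀ z : ℝ, (0:ℝ) < max |deriv f z| (Real.exp (-L - 1)) :=
    fun z => lt_of_lt_of_le (Real.exp_pos _) (le_max_right _ _)
  have hψ_cont : Continuous ψ := by
    refine Continuous.max ?_ continuous_const
    exact Continuous.log (hdc.abs.max continuous_const) (fun z => (hmaxpos z).ne')
  have hψ_le : ∀ z, ψ z ≤ max (Real.log |deriv f z|) (-L) := by
    intro z
    rcases le_or_gt (Real.exp (-L - 1)) |deriv f z| with h | h
    · simp only [hψdef]
      rw [max_eq_left h]
    · simp only [hψdef]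
      rw [max_eq_right h.le, Real.log_exp, max_eq_right (by linarith : -L - 1 ≤ -L)]
      exact le_max_right _ _
  have hD_le : ∀ z, |deriv f z| ≤ Real.exp (ψ z) := by
    intro z
    calc |deriv f z| ≤ max |deriv f z| (Real.exp (-L - 1)) := le_max_left _ _
      _ = Real.exp (Real.log (max |deriv f z| (Real.exp (-L - 1)))) :=
          (Real.exp_log (hmaxpos z)).symm
      _ ≤ Real.exp (ψ z) := Real.exp_le_exp.mpr (le_max_left _ _)
  have hderiv_bound : ∀ (m : ℕ) (y' : ℝ),
      |deriv (f^[m]) y'| ≤ Real.exp (∑ i ∈ Finset.range m, ψ (f^[i] y')) := by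
    intro m y'
    rw [deriv_iterate_eq_prod f hfd, Finset.abs_prod, Real.exp_sum]
    exact Finset.prod_le_prod (fun i _ => abs_nonneg _) (fun i _ => hD_le _)
  obtain ⟨C, hC⟩ :=
    (isCompact_Icc (a := a) (b := b)).exists_bound_of_continuousOn hψ_cont.continuousOn
  have hC0 : 0 ≤ C := le_trans (norm_nonneg _) (hC a (left_mem_Icc.mpr hab.le))
  have hψC : ∀ z ∈ Icc a b, ψ z ≤ C := fun z hz => le_trans (le_abs_self _) (hC z hz)
  obtain ⟨δ, hδ0, hδ⟩ := Metric.uniformContinuousOn_iff.mp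
    ((isCompact_Icc (a := a) (b := b)).uniformContinuousOn_of_continuous hψ_cont.continuousOn)
    (-A/8) (by linarith)
  have hae : ∀ᵐ x ∂ν, x ∈ Icc a b := by rw [ae_iff]; exact hsupp
  filter_upwards [hbirk, hae] with x hx hxI
  obtain ⟨N₀, hN₀⟩ := eventually_atTop.mp (hx.eventually_lt_const (by linarith : A < A/2))
  set N : ℕ := max N₀ 1 with hN
  have hSx : ∀ n : ℕ, N ≤ n →
      ∑ i ∈ Finset.range n, max (Real.log |deriv f (f^[i] x)|) (-L) ≤ (n:ℝ) * (A/2) := by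
    intro n hn
    have hn1 : (1:ℕ) ≤ n := le_trans (le_max_right _ _) hn
    have hnp : (0:ℝ) < n := by exact_mod_cast hn1
    have h := hN₀ n (le_trans (le_max_left _ _) hn)
    rw [one_div, inv_mul_eq_div] at h
    have h2 := (div_lt_iff₀ hnp).mp h
    linarith
  have hxorb : ∀ i : ℕ, f^[i] x ∈ Icc a b := fun i => hmaps.iterate i hxI
  set M : ℝ := Real.exp ((N:ℝ) * C) with hMdef
  have hM1 : (1:ℝ) ≤ M := Real.one_le_exp (by positivity)
  have hM0 : (0:ℝ) < M := lt_of_lt_of_le one_pos hM1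
  set τ : ℝ := δ / (2 * M) with hτdef
  have hτ0 : 0 < τ := by positivity
  have hτδ : M * τ = δ / 2 := by
    rw [hτdef]; field_simp
  have hτδ' : τ ≤ δ := by
    rw [hτdef]
    calc δ / (2 * M) ≤ δ / 1 := by
          apply div_le_div_of_nonneg_left hδ0.le one_pos (by linarith)
      _ = δ := div_one δ
  refine ⟨τ, hτ0, N, ?_⟩
  set s : Set ℝ := Metric.ball x τ ∩ Icc a b with hsdef
  have hconv : Convex ℝ s := (convex_ball x τ).inter (convex_Icc a b)
  have hxs : x ∈ s := ⟨Metric.mem_ball_self hτ0, hxI⟩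
  have hsum : ∀ (m : ℕ) (y' : ℝ), N ≤ m → (∀ i, f^[i] y' ∈ Icc a b) →
      (∀ i < m, |f^[i] y' - f^[i] x| < δ) →
      ∑ i ∈ Finset.range m, ψ (f^[i] y') ≤ (m:ℝ) * (3*A/8) := by
    intro m y' hm horb hclose
    have step : ∀ i ∈ Finset.range m, ψ (f^[i] y') ≤ ψ (f^[i] x) + (-A/8) := by
      intro i hi
      have hi' := Finset.mem_range.mp hi
      have hdist : dist (f^[i] y') (f^[i] x) < δ := by
        rw [Real.dist_eq]; exact hclose i hi'
      have h3 := hδ (f^[i] y') (horb i) (f^[i] x) (hxorb i) hdist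
      rw [Real.dist_eq] at h3
      have h4 := (abs_lt.mp h3).2
      linarith
    calc ∑ i ∈ Finset.range m, ψ (f^[i] y')
        ≤ ∑ i ∈ Finset.range m, (ψ (f^[i] x) + (-A/8)) := Finset.sum_le_sum step
      _ = (∑ i ∈ Finset.range m, ψ (f^[i] x)) + (m:ℝ) * (-A/8) := by
          rw [Finset.sum_add_distrib, Finset.sum_const, Finset.card_range, nsmul_eq_mul]
      _ ≤ (∑ i ∈ Finset.range m, max (Real.log |deriv f (f^[i] x)|) (-L)) + (m:ℝ) * (-A/8) :=
          add_le_add_left (Finset.sum_le_sum (fun i _ => hψ_le _)) _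
      _ ≤ (m:ℝ) * (A/2) + (m:ℝ) * (-A/8) := add_le_add_left (hSx m hm) _
      _ = (m:ℝ) * (3*A/8) := by ring
  have key : ∀ n : ℕ, ∀ y ∈ s, ∀ j ≤ n, |f^[j] y - f^[j] x| < δ := by
    intro n
    induction n with
    | zero =>
      intro y hy j hj
      interval_cases j
      simp only [Function.iterate_zero, id_eq]
      have h1 : |y - x| < τ := by
        rw [← Real.dist_eq]; exact Metric.mem_ball.mp hy.1
      linarith
    | succ n ih =>
      intro y hy j hj
      rcases eq_or_lt_of_le hj with rfl | hj'
      · -- j = n+1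
        have hder : ∀ y' ∈ s, ‖deriv (f^[n+1]) y'‖ ≤ M := by
          intro y' hy'
          have horb : ∀ i, f^[i] y' ∈ Icc a b := fun i => hmaps.iterate i hy'.2
          have hsb : ∑ i ∈ Finset.range (n+1), ψ (f^[i] y') ≤ (N:ℝ) * C := by
            rcases le_or_gt (n+1) N with hc | hc
            · calc ∑ i ∈ Finset.range (n+1), ψ (f^[i] y')
                  ≤ ∑ _i ∈ Finset.range (n+1), C :=
                    Finset.sum_le_sum (fun i _ => hψC _ (horb i))
                _ = ((n+1 : ℕ):ℝ) * C := by
                    rw [Finset.sum_const, Finset.card_range, nsmul_eq_mul]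
                _ ≤ (N:ℝ) * C := by
                    have hcast : ((n+1:ℕ):ℝ) ≤ (N:ℝ) := by exact_mod_cast hc
                    exact mul_le_mul_of_nonneg_right hcast hC0
            · have hmN : N ≤ n+1 := hc.le
              have h5 := hsum (n+1) y' hmN horb
                (fun i hi => ih y' hy' i (Nat.lt_succ_iff.mp hi))
              have hnn : (0:ℝ) ≤ ((n+1:ℕ):ℝ) := Nat.cast_nonneg _
              have h6 : ((n+1:ℕ):ℝ) * (3*A/8) ≤ 0 :=
                mul_nonpos_of_nonneg_of_nonpos hnn (by linarith)
              have h7 : (0:ℝ) ≤ (N:ℝ) * C :=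
                mul_nonneg (Nat.cast_nonneg _) hC0
              push_cast at h5 h6 ⊢
              linarith
          calc ‖deriv (f^[n+1]) y'‖ = |deriv (f^[n+1]) y'| := Real.norm_eq_abs _
            _ ≤ Real.exp (∑ i ∈ Finset.range (n+1), ψ (f^[i] y')) := hderiv_bound _ _
            _ ≤ Real.exp ((N:ℝ) * C) := Real.exp_le_exp.mpr hsb
            _ = M := by rw [hMdef]
        have hdiff : ∀ z ∈ s, DifferentiableAt ℝ (f^[n+1]) z :=
          fun z _ => (hfd.iterate (n+1)).differentiableAt
        have hmvt := hconv.norm_image_sub_le_of_norm_deriv_le hdiff hder hxs hy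
        have hyx : ‖y - x‖ < τ := by
          rw [← dist_eq_norm]; exact Metric.mem_ball.mp hy.1
        have hchain : ‖f^[n+1] y - f^[n+1] x‖ < δ := by
          calc ‖f^[n+1] y - f^[n+1] x‖ ≤ M * ‖y - x‖ := hmvt
            _ < M * τ := by exact mul_lt_mul_of_pos_left hyx hM0
            _ = δ / 2 := hτδ
            _ < δ := by linarith
        rw [← Real.norm_eq_abs]
        exact hchain
      · exact ih y hy j (Nat.lt_succ_iff.mp hj')
  intro n hn y hy
  have horb : ∀ i, f^[i] y ∈ Icc a b := fun i => hmaps.iterate i hy.2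
  have hsb := hsum n y hn horb (fun i hi => key n y hy i hi.le)
  have h38 : (3:ℝ)*A/8 ≤ A/4 := by linarith
  have h2 : (n:ℝ) * (3*A/8) ≤ -(n:ℝ) * (-A/4) := by
    have h3 := mul_le_mul_of_nonneg_left h38 (Nat.cast_nonneg (α := ℝ) n)
    have h4 : -(n:ℝ) * (-A/4) = (n:ℝ) * (A/4) := by ring
    linarith
  calc |deriv (f^[n]) y| ≤ Real.exp (∑ i ∈ Finset.range n, ψ (f^[i] y)) := hderiv_bound n y
    _ ≤ Real.exp ((n:ℝ) * (3*A/8)) := Real.exp_le_exp.mpr hsb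
    _ ≤ Real.exp (-(n:ℝ) * (-A/4)) := Real.exp_le_exp.mpr h2
end

section
/- Let f be an interval map of class C³ with non-flat critical points whose Julia set is completely invariant, and suppose f is topologically exact on its Julia set J(f). If p is a hyperbolic repelling periodic point of f in J(f) with Lyapunov exponent χ_p(f), then for every interval J ⊆ I intersecting J(f): liminf_{n→∞} (1/n) ln max{|W| : W a connected component of f^{−n}(J)} ≥ −χ_p(f). -/
open Metric Set Filter

open Topology

/-- The supremum of the diameters (lengths) of the connected components of `f^{-n}(J)`. -/
noncomputable def pullbackDiamSup (f : ℝ → ℝ) (J : Set ℝ) (n : ℕ) : ℝ :=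
  sSup ((fun w => Metric.diam (connectedComponentIn (f^[n] ⁻¹' J) w)) '' (f^[n] ⁻¹' J))


private lemma itd_zero_fun : ∀ k : ℕ, iteratedDeriv k (fun _ : ℝ => (0:ℝ)) = fun _ => 0 := by
  intro k
  induction k with
  | zero => simp [iteratedDeriv_zero]
  | succ k ih => rw [iteratedDeriv_succ', deriv_const']; exact ih

private lemma itd_const_eq_zero (c : ℝ) (k : ℕ) (hk : 1 ≤ k) :
    iteratedDeriv k (fun _ : ℝ => c) = fun _ => 0 := by
  obtain ⟨k', rfl⟩ : ∃ k', k = k' + 1 := ⟨k - 1, by omega⟩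
  rw [iteratedDeriv_succ', deriv_const']
  exact itd_zero_fun k'

private lemma iter_contDiff {f : ℝ → ℝ} (hf : ContDiff ℝ 3 f) : ∀ n, ContDiff ℝ 3 (f^[n])
  | 0 => contDiff_id
  | (n+1) => by rw [Function.iterate_succ']; exact hf.comp (iter_contDiff hf n)

private lemma not_iterate_const (a b : ℝ) (f : ℝ → ℝ)
    (hmaps : MapsTo f (Icc a b) (Icc a b)) (hfc : Continuous f)
    (hnonflat : ∀ c ∈ Icc a b, deriv f c = 0 → ∃ k : ℕ, 2 ≤ k ∧ iteratedDeriv k f c ≠ 0) :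
    ∀ n : ℕ, ∀ y z : ℝ, y < z → Icc y z ⊆ Icc a b →
      (∀ u ∈ Icc y z, f^[n] u = f^[n] z) → False := by
  intro n
  induction n with
  | zero =>
    intro y z hyz _ h
    have := h y (left_mem_Icc.mpr hyz.le)
    simp only [Function.iterate_zero, id_eq] at this
    exact absurd this (ne_of_lt hyz)
  | succ n ih =>
    intro y z hyz hsub h
    by_cases hconst : ∀ u ∈ Icc y z, f u = f z
    · set c := (y + z) / 2 with hc
      have hcIoo : c ∈ Ioo y z := ⟨by simp [hc]; linarith, by simp [hc]; linarith⟩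
      have hmem : Ioo y z ∈ 𝓝 c := isOpen_Ioo.mem_nhds hcIoo
      have hev : f =ᶠ[𝓝 c] (fun _ => f z) :=
        Filter.eventually_of_mem hmem (fun u hu => hconst u (Ioo_subset_Icc_self hu))
      have hd : deriv f c = 0 := by rw [hev.deriv_eq]; simp
      obtain ⟨k, hk2, hne⟩ := hnonflat c (hsub (Ioo_subset_Icc_self hcIoo)) hd
      apply hne
      rw [hev.iteratedDeriv_eq k, itd_const_eq_zero (f z) k (by omega)]
    · push_neg at hconst
      obtain ⟨u₀, hu₀, hneq⟩ := hconst
      set y₁ := min (f u₀) (f z) with hy₁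
      set z₁ := max (f u₀) (f z) with hz₁
      have hy₁z₁ : y₁ < z₁ := min_lt_max.mpr hneq
      have hsub1 : Icc y₁ z₁ ⊆ f '' Icc y z := by
        have h1 : uIcc (f u₀) (f z) ⊆ f '' uIcc u₀ z := intermediate_value_uIcc hfc.continuousOn
        have h2 : uIcc u₀ z ⊆ Icc y z :=
          (ordConnected_Icc).uIcc_subset hu₀ (right_mem_Icc.mpr hyz.le)
        have h3 : uIcc (f u₀) (f z) = Icc y₁ z₁ := rfl
        rw [← h3]
        exact h1.trans (image_mono h2)
      apply ih y₁ z₁ hy₁z₁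
      · intro v hv
        obtain ⟨u, hu, rfl⟩ := hsub1 hv
        exact hmaps (hsub hu)
      · intro v hv
        obtain ⟨u, hu, rfl⟩ := hsub1 hv
        obtain ⟨u', hu', hz₁'⟩ := hsub1 (right_mem_Icc.mpr hy₁z₁.le)
        rw [← hz₁', ← Function.iterate_succ_apply, ← Function.iterate_succ_apply,
          h u hu, h u' hu']


private lemma pullback_step (g : ℝ → ℝ) (hgc : Continuous g) (hgd : Differentiable ℝ g)
    (hdc : Continuous (deriv g))
    (p δ μ Λ : ℝ) (hδ : 0 < δ) (hμ : 1 < μ) (hgp : g p = p)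
    (hbd : ∀ x ∈ Icc (p-δ) (p+δ), μ ≤ |deriv g x| ∧ |deriv g x| ≤ Λ)
    (s t : ℝ) (hst : s ≤ t) (hs : p - δ ≤ s) (ht : t ≤ p + δ) :
    ∃ s' t', s' ≤ t' ∧ p - δ ≤ s' ∧ t' ≤ p + δ ∧ g '' Icc s' t' = Icc s t ∧
      t - s ≤ Λ * (t' - s') := by
  have hpT : p ∈ Icc (p-δ) (p+δ) := ⟨by linarith, by linarith⟩
  have hΛpos : 0 < Λ := lt_of_lt_of_le (by linarith : (0:ℝ) < μ)
    (le_trans (hbd p hpT).1 (hbd p hpT).2)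
  have hne : ∀ x ∈ Icc (p-δ) (p+δ), deriv g x ≠ 0 := by
    intro x hx h
    have := (hbd x hx).1
    rw [h, abs_zero] at this
    linarith
  have hsign : (∀ x ∈ Icc (p-δ) (p+δ), 0 < deriv g x) ∨
      (∀ x ∈ Icc (p-δ) (p+δ), deriv g x < 0) := by
    have hconst : ∀ x ∈ Icc (p-δ) (p+δ), (0 < deriv g p → 0 < deriv g x) ∧
        (deriv g p < 0 → deriv g x < 0) := by
      intro x hx
      constructor <;> intro hpd
      · rcases (hne x hx).lt_or_gt with hneg | hpos
        · exfalso
          have h0 : (0:ℝ) ∈ uIcc (deriv g x) (deriv g p) :=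
            Set.mem_uIcc.mpr (Or.inl ⟨hneg.le, hpd.le⟩)
          obtain ⟨ξ, hξ, hξ0⟩ := intermediate_value_uIcc (hdc.continuousOn) h0
          exact hne ξ (ordConnected_Icc.uIcc_subset hx hpT hξ) hξ0
        · exact hpos
      · rcases (hne x hx).lt_or_gt with hneg | hpos
        · exact hneg
        · exfalso
          have h0 : (0:ℝ) ∈ uIcc (deriv g p) (deriv g x) :=
            Set.mem_uIcc.mpr (Or.inl ⟨hpd.le, hpos.le⟩)
          obtain ⟨ξ, hξ, hξ0⟩ := intermediate_value_uIcc (hdc.continuousOn) h0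
          exact hne ξ (ordConnected_Icc.uIcc_subset hpT hx hξ) hξ0
    rcases (hne p hpT).lt_or_gt with h | h
    · right; exact fun x hx => (hconst x hx).2 h
    · left; exact fun x hx => (hconst x hx).1 h
  have hδμ : δ ≤ μ * δ := le_mul_of_one_le_left hδ.le hμ.le
  rcases hsign with hpos | hneg
  · -- increasing case
    have hmono : StrictMonoOn g (Icc (p-δ) (p+δ)) :=
      strictMonoOn_of_deriv_pos (convex_Icc _ _) hgc.continuousOn
        (fun x hx => hpos x (interior_subset hx))
    have hend1 : g (p - δ) ≤ p - μ * δ := by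
      obtain ⟨ξ, hξ, hslope⟩ := exists_deriv_eq_slope g (show p - δ < p by linarith)
        hgc.continuousOn hgd.differentiableOn
      have hξT : ξ ∈ Icc (p-δ) (p+δ) := ⟨hξ.1.le, by linarith [hξ.2]⟩
      have hμξ : μ ≤ deriv g ξ := by
        have := (hbd ξ hξT).1
        rwa [abs_of_pos (hpos ξ hξT)] at this
      rw [hgp] at hslope
      have h1 : p - g (p - δ) = deriv g ξ * δ := by
        have hd0 : p - (p - δ) = δ := by ring
        rw [hd0] at hslope
        field_simp at hslope
        linarith
      nlinarith
    have hend2 : p + μ * δ ≤ g (p + δ) := by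
      obtain ⟨ξ, hξ, hslope⟩ := exists_deriv_eq_slope g (show p < p + δ by linarith)
        hgc.continuousOn hgd.differentiableOn
      have hξT : ξ ∈ Icc (p-δ) (p+δ) := ⟨by linarith [hξ.1], hξ.2.le⟩
      have hμξ : μ ≤ deriv g ξ := by
        have := (hbd ξ hξT).1
        rwa [abs_of_pos (hpos ξ hξT)] at this
      rw [hgp] at hslope
      have h1 : g (p + δ) - p = deriv g ξ * δ := by
        have hd0 : p + δ - p = δ := by ring
        rw [hd0] at hslope
        field_simp at hslope
        linarith
      nlinarith
    have hIVT := intermediate_value_Icc (show p - δ ≤ p + δ by linarith) hgc.continuousOn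
    obtain ⟨s', hs'T, hgs'⟩ : ∃ s' ∈ Icc (p-δ) (p+δ), g s' = s :=
      hIVT ⟨by linarith, by linarith⟩
    obtain ⟨t', ht'T, hgt'⟩ : ∃ t' ∈ Icc (p-δ) (p+δ), g t' = t :=
      hIVT ⟨by linarith, by linarith⟩
    have hs't' : s' ≤ t' := by
      by_contra hcon
      push_neg at hcon
      have := hmono ht'T hs'T hcon
      rw [hgs', hgt'] at this
      linarith
    refine ⟨s', t', hs't', hs'T.1, ht'T.2, ?_, ?_⟩
    · apply Subset.antisymm
      · rintro _ ⟨x, hx, rfl⟩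
        have hxT : x ∈ Icc (p-δ) (p+δ) := ⟨le_trans hs'T.1 hx.1, le_trans hx.2 ht'T.2⟩
        constructor
        · rw [← hgs']; exact hmono.monotoneOn hs'T hxT hx.1
        · rw [← hgt']; exact hmono.monotoneOn hxT ht'T hx.2
      · have := intermediate_value_Icc hs't' hgc.continuousOn
        rw [hgs', hgt'] at this
        exact this
    · rcases eq_or_lt_of_le hst with rfl | hstlt
      · have : 0 ≤ t' - s' := by linarith
        nlinarith
      · have hs't'lt : s' < t' := by
          rcases eq_or_lt_of_le hs't' with rfl | h
          · rw [hgs'] at hgt'; exact absurd hgt' (ne_of_lt hstlt)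
          · exact h
        obtain ⟨ξ, hξ, hslope⟩ := exists_deriv_eq_slope g hs't'lt
          hgc.continuousOn hgd.differentiableOn
        have hξT : ξ ∈ Icc (p-δ) (p+δ) :=
          ⟨le_trans hs'T.1 hξ.1.le, le_trans hξ.2.le ht'T.2⟩
        have hΛξ : deriv g ξ ≤ Λ := le_trans (le_abs_self _) (hbd ξ hξT).2
        rw [hgs', hgt'] at hslope
        have hne' : t' - s' ≠ 0 := sub_ne_zero.mpr hs't'lt.ne'
        have h1 : t - s = deriv g ξ * (t' - s') := by
          field_simp [hne'] at hslope
          linarith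
        nlinarith
  · -- decreasing case
    have hmono : StrictAntiOn g (Icc (p-δ) (p+δ)) :=
      strictAntiOn_of_deriv_neg (convex_Icc _ _) hgc.continuousOn
        (fun x hx => hneg x (interior_subset hx))
    have hend1 : p + μ * δ ≤ g (p - δ) := by
      obtain ⟨ξ, hξ, hslope⟩ := exists_deriv_eq_slope g (show p - δ < p by linarith)
        hgc.continuousOn hgd.differentiableOn
      have hξT : ξ ∈ Icc (p-δ) (p+δ) := ⟨hξ.1.le, by linarith [hξ.2]⟩
      have hμξ : deriv g ξ ≤ -μ := by
        have := (hbd ξ hξT).1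
        rw [abs_of_neg (hneg ξ hξT)] at this
        linarith
      rw [hgp] at hslope
      have h1 : p - g (p - δ) = deriv g ξ * δ := by
        have hd0 : p - (p - δ) = δ := by ring
        rw [hd0] at hslope
        field_simp at hslope
        linarith
      nlinarith
    have hend2 : g (p + δ) ≤ p - μ * δ := by
      obtain ⟨ξ, hξ, hslope⟩ := exists_deriv_eq_slope g (show p < p + δ by linarith)
        hgc.continuousOn hgd.differentiableOn
      have hξT : ξ ∈ Icc (p-δ) (p+δ) := ⟨by linarith [hξ.1], hξ.2.le⟩
      have hμξ : deriv g ξ ≤ -μ := by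
        have := (hbd ξ hξT).1
        rw [abs_of_neg (hneg ξ hξT)] at this
        linarith
      rw [hgp] at hslope
      have h1 : g (p + δ) - p = deriv g ξ * δ := by
        have hd0 : p + δ - p = δ := by ring
        rw [hd0] at hslope
        field_simp at hslope
        linarith
      nlinarith
    have hIVT := intermediate_value_Icc' (show p - δ ≤ p + δ by linarith) hgc.continuousOn
    obtain ⟨s', hs'T, hgs'⟩ : ∃ s' ∈ Icc (p-δ) (p+δ), g s' = t :=
      hIVT ⟨by linarith, by linarith⟩
    obtain ⟨t', ht'T, hgt'⟩ : ∃ t' ∈ Icc (p-δ) (p+δ), g t' = s :=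
      hIVT ⟨by linarith, by linarith⟩
    have hs't' : s' ≤ t' := by
      by_contra hcon
      push_neg at hcon
      have := hmono ht'T hs'T hcon
      rw [hgs', hgt'] at this
      linarith
    refine ⟨s', t', hs't', hs'T.1, ht'T.2, ?_, ?_⟩
    · apply Subset.antisymm
      · rintro _ ⟨x, hx, rfl⟩
        have hxT : x ∈ Icc (p-δ) (p+δ) := ⟨le_trans hs'T.1 hx.1, le_trans hx.2 ht'T.2⟩
        constructor
        · rw [← hgt']; exact hmono.antitoneOn hxT ht'T hx.2
        · rw [← hgs']; exact hmono.antitoneOn hs'T hxT hx.1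
      · have := intermediate_value_Icc' hs't' hgc.continuousOn
        rw [hgs', hgt'] at this
        exact this
    · rcases eq_or_lt_of_le hst with rfl | hstlt
      · have : 0 ≤ t' - s' := by linarith
        nlinarith
      · have hs't'lt : s' < t' := by
          rcases eq_or_lt_of_le hs't' with rfl | h
          · rw [hgs'] at hgt'; exact absurd hgt'.symm (ne_of_lt hstlt)
          · exact h
        obtain ⟨ξ, hξ, hslope⟩ := exists_deriv_eq_slope g hs't'lt
          hgc.continuousOn hgd.differentiableOn
        have hξT : ξ ∈ Icc (p-δ) (p+δ) :=
          ⟨le_trans hs'T.1 hξ.1.le, le_trans hξ.2.le ht'T.2⟩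
        have hΛξ : -Λ ≤ deriv g ξ := neg_le_of_abs_le (hbd ξ hξT).2
        rw [hgs', hgt'] at hslope
        have hne' : t' - s' ≠ 0 := sub_ne_zero.mpr hs't'lt.ne'
        have h1 : s - t = deriv g ξ * (t' - s') := by
          field_simp [hne'] at hslope
          linarith
        nlinarith

set_option maxHeartbeats 1600000 in
/-- Let `f` be a `C³` interval map with non-flat critical points, whose Julia
set `Jf` is completely invariant, and which is topologically exact on `Jf`.  If `p ∈ Jf` is
a hyperbolic repelling periodic point of period `ℓ`, then for every interval `J`
intersecting `Jf`,
`liminf (1/n) ln max{|W| : W component of f^{-n}(J)} ≥ -χ_p(f)`. -/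
theorem liminf_component_diam_ge_neg_periodic_exponent
    (a b : ℝ) (hab : a < b) (f : ℝ → ℝ)
    (hf : ContDiff ℝ 3 f) (hmaps : MapsTo f (Icc a b) (Icc a b))
    (hnonflat : ∀ c ∈ Icc a b, deriv f c = 0 → ∃ k : ℕ, 2 ≤ k ∧ iteratedDeriv k f c ≠ 0)
    (Jf : Set ℝ) (hJfI : Jf ⊆ Icc a b) (hJfinv : f ⁻¹' Jf = Jf)
    (hJfnt : ¬ Jf.Subsingleton)
    (hexact : ∀ U : Set ℝ, IsOpen U → (U ∩ Jf).Nonempty →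
      ∃ n : ℕ, f^[n] '' (U ∩ Icc a b) = Jf)
    (p : ℝ) (hp : p ∈ Jf) (ℓ : ℕ) (hℓ : 1 ≤ ℓ) (hper : f^[ℓ] p = p)
    (hrep : 1 < |deriv (f^[ℓ]) p|) :
    ∀ J : Set ℝ, J ⊆ Icc a b → J.OrdConnected → (J ∩ Jf).Nonempty →
      -( (1 / (ℓ : ℝ)) * Real.log |deriv (f^[ℓ]) p| ) ≤
        Filter.liminf (fun n : ℕ => (1 / (n : ℝ)) * Real.log (pullbackDiamSup f J n))
          Filter.atTop := by
  intro J hJI hJoc hJJf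
  have hfc : Continuous f := hf.continuous
  have hlam : 1 < |deriv (f^[ℓ]) p| := hrep
  -- complete invariance of Jf under iterates
  have hinv : ∀ n : ℕ, f^[n] ⁻¹' Jf = Jf := by
    intro n
    induction n with
    | zero => simp
    | succ n ih => rw [Function.iterate_succ, Set.preimage_comp, ih, hJfinv]
  -- Jf is the whole interval
  obtain ⟨w0, hw0, w1, hw1, hww⟩ := Set.not_subsingleton_iff.mp hJfnt
  have hJfIcc : Jf = Icc a b := by
    obtain ⟨N, hN⟩ := hexact univ isOpen_univ ⟨w0, mem_univ w0, hw0⟩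
    apply Subset.antisymm hJfI
    intro x hx
    have hx' : f^[N] x ∈ Jf := by
      rw [← hN]; exact ⟨x, by simpa using hx, rfl⟩
    rw [← hinv N]; exact hx'
  -- preimages of J stay in [a,b]
  have hpre : ∀ n : ℕ, f^[n] ⁻¹' J ⊆ Icc a b := by
    intro n x hx
    have : f^[n] x ∈ Jf := by rw [hJfIcc]; exact hJI hx
    rw [← hJfIcc, ← hinv n]
    exact this
  -- basic bounds on pullbackDiamSup
  have hSnonneg : ∀ n, 0 ≤ pullbackDiamSup f J n := by
    intro n
    apply Real.sSup_nonneg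
    rintro x ⟨w, hw, rfl⟩
    exact diam_nonneg
  have hSle : ∀ n, pullbackDiamSup f J n ≤ b - a := by
    intro n
    apply Real.sSup_le ?_ (by linarith)
    rintro x ⟨w, hw, rfl⟩
    calc diam (connectedComponentIn (f^[n] ⁻¹' J) w) ≤ diam (Icc a b) :=
          diam_mono ((connectedComponentIn_subset _ _).trans (hpre n)) (isBounded_Icc (a := a) (b := b))
      _ = b - a := Real.diam_Icc hab.le
  -- boundedness of the liminf function
  have hbdd : IsBoundedUnder (· ≤ ·) atTop
      (fun n : ℕ => (1 / (n : ℝ)) * Real.log (pullbackDiamSup f J n)) := by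
    apply isBoundedUnder_of
    refine ⟨max 0 (Real.log (b - a)), fun n => ?_⟩
    have hn0 : (0:ℝ) ≤ 1 / (n:ℝ) := by positivity
    have hn1 : 1 / (n:ℝ) ≤ 1 := by
      rcases Nat.eq_zero_or_pos n with rfl | hn
      · simp
      · apply div_le_one_of_le₀
        · exact_mod_cast hn
        · positivity
    rcases le_or_gt (Real.log (pullbackDiamSup f J n)) 0 with hL | hL
    · have : 1 / (n:ℝ) * Real.log (pullbackDiamSup f J n) ≤ 0 := mul_nonpos_of_nonneg_of_nonpos hn0 hL
      exact this.trans (le_max_left _ _)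
    · have h1 : 1 / (n:ℝ) * Real.log (pullbackDiamSup f J n) ≤ Real.log (pullbackDiamSup f J n) := by
        nlinarith
      have hSpos : 0 < pullbackDiamSup f J n := by
        rcases eq_or_lt_of_le (hSnonneg n) with h | h
        · rw [← h, Real.log_zero] at hL; exact absurd hL (lt_irrefl 0)
        · exact h
      have h2 : Real.log (pullbackDiamSup f J n) ≤ Real.log (b - a) :=
        Real.log_le_log hSpos (hSle n)
      exact h1.trans (h2.trans (le_max_right _ _))
  have hcob : IsCoboundedUnder (· ≥ ·) atTop
      (fun n : ℕ => (1 / (n : ℝ)) * Real.log (pullbackDiamSup f J n)) := hbdd.isCoboundedUnder_ge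
  by_cases hJs : J.Subsingleton
  · -- degenerate case: all components are singletons
    have hcompsing : ∀ (n : ℕ) (w : ℝ), (connectedComponentIn (f^[n] ⁻¹' J) w).Subsingleton := by
      intro n w y hy z hz
      by_contra hne
      have key : ∀ y z : ℝ, y ∈ connectedComponentIn (f^[n] ⁻¹' J) w →
          z ∈ connectedComponentIn (f^[n] ⁻¹' J) w → y < z → False := by
        intro y z hy hz hyz
        have hIcc : Icc y z ⊆ f^[n] ⁻¹' J :=
          (isPreconnected_connectedComponentIn.ordConnected.out hy hz).trans
            (connectedComponentIn_subset _ _)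
        exact not_iterate_const a b f hmaps hfc hnonflat n y z hyz
          (fun u hu => hpre n (hIcc hu))
          (fun u hu => hJs (hIcc hu) (hIcc (right_mem_Icc.mpr hyz.le)))
      rcases lt_trichotomy y z with h | h | h
      · exact key y z hy hz h
      · exact hne h
      · exact key z y hz hy h
    have hS0 : ∀ n, pullbackDiamSup f J n = 0 := by
      intro n
      have h1 : pullbackDiamSup f J n ≤ 0 := by
        apply Real.sSup_nonpos
        rintro x ⟨w, hw, rfl⟩
        exact le_of_eq (diam_subsingleton (hcompsing n w))
      exact le_antisymm h1 (hSnonneg n)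
    have hfun : (fun n : ℕ => (1 / (n : ℝ)) * Real.log (pullbackDiamSup f J n))
        = fun _ : ℕ => (0:ℝ) := by
      funext n; rw [hS0 n, Real.log_zero, mul_zero]
    rw [hfun, liminf_const]
    have h0 : 0 ≤ (1 / (ℓ:ℝ)) * Real.log |deriv (f^[ℓ]) p| :=
      mul_nonneg (by positivity) (Real.log_nonneg hlam.le)
    linarith
  · -- main case: J contains two points
    rw [Set.not_subsingleton_iff] at hJs
    obtain ⟨q1', hq1', q2', hq2', hqne⟩ := hJs
    obtain ⟨q1, q2, hq1, hq2, hq12⟩ : ∃ q1 q2, q1 ∈ J ∧ q2 ∈ J ∧ q1 < q2 := by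
      rcases lt_trichotomy q1' q2' with h | h | h
      · exact ⟨q1', q2', hq1', hq2', h⟩
      · exact absurd h hqne
      · exact ⟨q2', q1', hq2', hq1', h⟩
    -- surjectivity of f on [a,b]
    have hsurj1 : f '' Icc a b = Icc a b := by
      have hUJ : (({a}ᶜ : Set ℝ) ∩ Jf).Nonempty := by
        rcases eq_or_ne w0 a with rfl | hne
        · refine ⟨w1, ?_, hw1⟩
          simp only [mem_compl_iff, mem_singleton_iff]
          exact fun h => hww h.symm
        · exact ⟨w0, by simp [hne], hw0⟩
      obtain ⟨N, hN⟩ := hexact _ isOpen_compl_singleton hUJ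
      rw [hJfIcc] at hN
      cases N with
      | zero =>
        exfalso
        simp only [Function.iterate_zero, Set.image_id] at hN
        have ha : a ∈ Icc a b := left_mem_Icc.mpr hab.le
        rw [← hN] at ha
        exact ha.1 rfl
      | succ N =>
        apply Subset.antisymm hmaps.image_subset
        rw [Function.iterate_succ', Set.image_comp] at hN
        intro y hy
        rw [← hN] at hy
        obtain ⟨z, hz, rfl⟩ := hy
        obtain ⟨x, hx, rfl⟩ := hz
        exact ⟨f^[N] x, (hmaps.iterate N) hx.2, rfl⟩
    have hsurj : ∀ j : ℕ, f^[j] '' Icc a b = Icc a b := by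
      intro j
      induction j with
      | zero => simp
      | succ j ih => rw [Function.iterate_succ', Set.image_comp, ih, hsurj1]
    -- the key eventual estimate
    have key : ∀ ε : ℝ, 0 < ε → ∀ᶠ n : ℕ in atTop,
        -( (1/(ℓ:ℝ)) * Real.log |deriv (f^[ℓ]) p| ) - ε ≤
          (1 / (n : ℝ)) * Real.log (pullbackDiamSup f J n) := by
      intro ε hε
      have hℓpos : (0:ℝ) < (ℓ:ℝ) := by exact_mod_cast (by omega : 0 < ℓ)
      set lam := |deriv (f^[ℓ]) p| with hlamdef
      have hlampos : 0 < lam := lt_trans one_pos hlam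
      have hexppos : 0 < (ℓ:ℝ) * ε / 2 := by
        have := mul_pos hℓpos hε
        linarith
      have hexp1 : 1 < Real.exp ((ℓ:ℝ) * ε / 2) := by
        rw [show (1:ℝ) = Real.exp 0 from (Real.exp_zero).symm]
        exact Real.exp_lt_exp.mpr hexppos
      set Λ := lam * Real.exp ((ℓ:ℝ) * ε / 2) with hΛdef
      have hΛlam : lam < Λ := by
        calc lam = lam * 1 := (mul_one lam).symm
          _ < lam * Real.exp ((ℓ:ℝ) * ε / 2) := by
              exact mul_lt_mul_of_pos_left hexp1 hlampos
      have hΛpos : 0 < Λ := by linarith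
      set μ := (1 + lam)/2 with hμdef
      have hμ1 : 1 < μ := by rw [hμdef]; linarith
      have hμlam : μ < lam := by rw [hμdef]; linarith
      have hgC := iter_contDiff hf ℓ
      have hgc : Continuous (f^[ℓ]) := hfc.iterate ℓ
      have hgd : Differentiable ℝ (f^[ℓ]) := hgC.differentiable (by norm_num)
      have hdc : Continuous (deriv (f^[ℓ])) := hgC.continuous_deriv (by norm_num)
      set gap := min (lam - μ) (Λ - lam) with hgap
      have hgappos : 0 < gap := lt_min (by linarith) (by linarith)
      obtain ⟨δ₀, hδ₀pos, hδ₀⟩ := Metric.continuousAt_iff.mp hdc.continuousAt gap hgappos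
      set δ := δ₀ / 2 with hδdef
      have hδpos : 0 < δ := by positivity
      have hbd : ∀ x ∈ Icc (p-δ) (p+δ), μ ≤ |deriv (f^[ℓ]) x| ∧ |deriv (f^[ℓ]) x| ≤ Λ := by
        intro x hx
        have hdist : dist x p < δ₀ := by
          rw [Real.dist_eq]
          have h5 : |x - p| ≤ δ := abs_le.mpr ⟨by linarith [hx.1], by linarith [hx.2]⟩
          rw [hδdef] at h5
          linarith
        have h1 := hδ₀ hdist
        rw [Real.dist_eq] at h1
        have hgap1 : gap ≤ lam - μ := min_le_left _ _
        have hgap2 : gap ≤ Λ - lam := min_le_right _ _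
        constructor
        · have h2 : lam - |deriv (f^[ℓ]) x| ≤ |deriv (f^[ℓ]) p - deriv (f^[ℓ]) x| :=
            abs_sub_abs_le_abs_sub _ _
          rw [abs_sub_comm] at h1
          linarith
        · have h2 : |deriv (f^[ℓ]) x| - lam ≤ |deriv (f^[ℓ]) x - deriv (f^[ℓ]) p| :=
            abs_sub_abs_le_abs_sub _ _
          linarith
      -- exactness near p
      obtain ⟨m, hm⟩ := hexact (Ioo (p-δ) (p+δ)) isOpen_Ioo
        ⟨p, ⟨by linarith, by linarith⟩, hp⟩
      have hqmid : (q1+q2)/2 ∈ Ioo q1 q2 := ⟨by linarith, by linarith⟩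
      have hIoosub : Ioo q1 q2 ⊆ J := fun x hx => hJoc.out hq1 hq2 ⟨hx.1.le, hx.2.le⟩
      have hxs : ∀ s : ℕ, ∃ x r' : ℝ, 0 < r' ∧ Icc (x - r') (x + r') ⊆ Icc (p-δ) (p+δ) ∧
          f^[s + m] '' Icc (x - r') (x + r') ⊆ J := by
        intro s
        have himg : f^[s + m] '' (Ioo (p-δ) (p+δ) ∩ Icc a b) = Icc a b := by
          rw [Function.iterate_add, Set.image_comp, hm, hJfIcc, hsurj s]
        have hq' : (q1+q2)/2 ∈ Icc a b := hJI (hIoosub hqmid)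
        rw [← himg] at hq'
        obtain ⟨x, hxU, hfx⟩ := hq'
        have hnb : (f^[s+m]) ⁻¹' (Ioo q1 q2) ∈ 𝓝 x :=
          (hfc.iterate (s+m)).continuousAt.preimage_mem_nhds
            (isOpen_Ioo.mem_nhds (by rw [hfx]; exact hqmid))
        obtain ⟨ε₁, hε₁, hball1⟩ := Metric.mem_nhds_iff.mp hnb
        obtain ⟨ε₂, hε₂, hball2⟩ := Metric.mem_nhds_iff.mp (isOpen_Ioo.mem_nhds hxU.1)
        refine ⟨x, min ε₁ ε₂ / 2, by positivity, ?_, ?_⟩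
        · intro y hy
          have hyx : |y - x| ≤ min ε₁ ε₂ / 2 :=
            abs_le.mpr ⟨by linarith [hy.1], by linarith [hy.2]⟩
          have h7 : y ∈ Ioo (p-δ) (p+δ) := by
            apply hball2
            rw [mem_ball, Real.dist_eq]
            have h8 := min_le_right ε₁ ε₂
            have h9 : 0 < min ε₁ ε₂ := lt_min hε₁ hε₂
            linarith
          exact ⟨h7.1.le, h7.2.le⟩
        · rintro _ ⟨y, hy, rfl⟩
          apply hIoosub
          apply hball1
          rw [mem_ball, Real.dist_eq]
          have hyx : |y - x| ≤ min ε₁ ε₂ / 2 :=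
            abs_le.mpr ⟨by linarith [hy.1], by linarith [hy.2]⟩
          have h8 := min_le_left ε₁ ε₂
          have h9 : 0 < min ε₁ ε₂ := lt_min hε₁ hε₂
          linarith
      choose xx rr hrpos hsubT himJ using hxs
      -- iterated pullback along the periodic branch
      have iter : ∀ (x r' : ℝ) (m' : ℕ), 0 < r' →
          Icc (x - r') (x + r') ⊆ Icc (p-δ) (p+δ) →
          f^[m'] '' Icc (x - r') (x + r') ⊆ J →
          ∀ k : ℕ, ∃ α β : ℝ, α ≤ β ∧ 2*r' ≤ Λ^k * (β - α) ∧
            Icc α β ⊆ Icc (p-δ) (p+δ) ∧ f^[ℓ*k + m'] '' Icc α β ⊆ J := by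
        intro x r' m' hr' hsubx himx k
        induction k with
        | zero =>
          refine ⟨x - r', x + r', by linarith, ?_, hsubx, by simpa using himx⟩
          simp only [pow_zero, one_mul]
          linarith
        | succ k ih =>
          obtain ⟨α, β, hαβ, hlen, hsubT', himJ'⟩ := ih
          obtain ⟨α', β', hαβ', hα'T, hβ'T, himg2, hlen2⟩ :=
            pullback_step (f^[ℓ]) hgc hgd hdc p δ μ Λ hδpos hμ1 hper hbd α β hαβ
              (hsubT' (left_mem_Icc.mpr hαβ)).1 (hsubT' (right_mem_Icc.mpr hαβ)).2
          refine ⟨α', β', hαβ', ?_, Icc_subset_Icc hα'T hβ'T |>.trans ?_, ?_⟩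
          · have hΛk : (0:ℝ) ≤ Λ^k := (pow_pos hΛpos k).le
            calc 2*r' ≤ Λ^k * (β - α) := hlen
              _ ≤ Λ^k * (Λ * (β' - α')) := mul_le_mul_of_nonneg_left hlen2 hΛk
              _ = Λ^(k+1) * (β' - α') := by rw [pow_succ]; ring
          · exact Subset.rfl
          · have hexp : ℓ*(k+1) + m' = (ℓ*k + m') + ℓ := by ring
            rw [hexp, Function.iterate_add, Set.image_comp, himg2]
            exact himJ'
      -- minimum starting length over the residues
      have hrange : (Finset.range ℓ).Nonempty := Finset.nonempty_range_iff.mpr (by omega)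
      set c := (Finset.range ℓ).inf' hrange (fun s => 2 * rr s) with hcdef
      have hcpos : 0 < c := by
        rw [hcdef, Finset.lt_inf'_iff]
        intro i _
        have := hrpos i
        linarith
      have hcle : ∀ s, s < ℓ → c ≤ 2 * rr s := fun s hs =>
        Finset.inf'_le _ (Finset.mem_range.mpr hs)
      have hL : (0:ℝ) ≤ Real.log lam := Real.log_nonneg hlam.le
      have hlogΛ : Real.log Λ = Real.log lam + (ℓ:ℝ)*ε/2 := by
        rw [hΛdef, Real.log_mul (by positivity) (Real.exp_ne_zero _), Real.log_exp]
      have hev1 : ∀ᶠ n : ℕ in atTop, m + ℓ ≤ n := eventually_ge_atTop _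
      have hev2 : ∀ᶠ n : ℕ in atTop, 2*|Real.log c|/ε ≤ (n:ℝ) :=
        (tendsto_natCast_atTop_atTop (R := ℝ)).eventually_ge_atTop _
      filter_upwards [hev1, hev2] with n hn1 hn2
      set k := (n - m) / ℓ with hkdef
      set s := (n - m) % ℓ with hsdef
      have hsℓ : s < ℓ := by rw [hsdef]; exact Nat.mod_lt _ (by omega)
      have hnk : ℓ * k + (s + m) = n := by
        rw [hkdef, hsdef]
        have := Nat.div_add_mod (n - m) ℓ
        omega
      obtain ⟨α, β, hαβ, hlen, hsubT2, himJ2⟩ :=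
        iter (xx s) (rr s) (s + m) (hrpos s) (hsubT s) (himJ s) k
      rw [hnk] at himJ2
      have hαmem : α ∈ f^[n] ⁻¹' J := himJ2 ⟨α, left_mem_Icc.mpr hαβ, rfl⟩
      have hcompsub : Icc α β ⊆ connectedComponentIn (f^[n] ⁻¹' J) α :=
        isPreconnected_Icc.subset_connectedComponentIn (left_mem_Icc.mpr hαβ)
          (fun y hy => himJ2 ⟨y, hy, rfl⟩)
      have hbddA : BddAbove ((fun w => diam (connectedComponentIn (f^[n] ⁻¹' J) w)) ''
          (f^[n] ⁻¹' J)) := by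
        refine ⟨b - a, ?_⟩
        rintro v ⟨w, hw, rfl⟩
        calc diam (connectedComponentIn (f^[n] ⁻¹' J) w) ≤ diam (Icc a b) :=
            diam_mono ((connectedComponentIn_subset _ _).trans (hpre n)) (isBounded_Icc a b)
          _ = b - a := Real.diam_Icc hab.le
      have hdle : β - α ≤ pullbackDiamSup f J n := by
        have h1 : β - α ≤ diam (connectedComponentIn (f^[n] ⁻¹' J) α) := by
          rw [← Real.diam_Icc hαβ]
          exact diam_mono hcompsub
            ((isBounded_Icc a b).subset ((connectedComponentIn_subset _ _).trans (hpre n)))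
        exact h1.trans (le_csSup hbddA ⟨α, hαmem, rfl⟩)
      have hΛk : (0:ℝ) < Λ^k := pow_pos hΛpos k
      have hβαpos : 0 < β - α := by
        by_contra hcon
        push_neg at hcon
        have h5 : Λ^k * (β - α) ≤ 0 := mul_nonpos_of_nonneg_of_nonpos hΛk.le hcon
        linarith [hrpos s, hlen]
      have hSpos : 0 < pullbackDiamSup f J n := lt_of_lt_of_le hβαpos hdle
      have hβα' : c / Λ^k ≤ β - α := by
        rw [div_le_iff₀ hΛk, mul_comm]
        linarith [hcle s hsℓ, hlen]
      have hlog1 : Real.log c - (k:ℝ) * Real.log Λ ≤ Real.log (pullbackDiamSup f J n) := by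
        have h2 := Real.log_le_log (by positivity) (hβα'.trans hdle)
        rwa [Real.log_div (ne_of_gt hcpos) (ne_of_gt hΛk), Real.log_pow] at h2
      have hkn : (ℓ:ℝ) * (k:ℝ) ≤ (n:ℝ) := by
        have h3 : ℓ * k ≤ n := by omega
        exact_mod_cast h3
      have hnpos : (0:ℝ) < (n:ℝ) := by
        have : 1 ≤ n := by omega
        exact_mod_cast Nat.lt_of_lt_of_le Nat.zero_lt_one this
      have hnne : (n:ℝ) ≠ 0 := ne_of_gt hnpos
      have hklogΛ : (k:ℝ) * Real.log Λ ≤ (n:ℝ) * ((1/(ℓ:ℝ)) * Real.log lam + ε/2) := by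
        rw [hlogΛ]
        have hk1 : (k:ℝ) * Real.log lam ≤ (n:ℝ)/(ℓ:ℝ) * Real.log lam := by
          apply mul_le_mul_of_nonneg_right ?_ hL
          rw [le_div_iff₀ hℓpos]
          linarith [hkn]
        have hk2 : (k:ℝ) * ((ℓ:ℝ)*ε/2) ≤ (n:ℝ)*(ε/2) := by
          have h := mul_le_mul_of_nonneg_right hkn (by positivity : (0:ℝ) ≤ ε/2)
          calc (k:ℝ)*((ℓ:ℝ)*ε/2) = ((ℓ:ℝ)*(k:ℝ))*(ε/2) := by ring
            _ ≤ (n:ℝ)*(ε/2) := h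
        calc (k:ℝ) * (Real.log lam + (ℓ:ℝ)*ε/2)
            = (k:ℝ)*Real.log lam + (k:ℝ)*((ℓ:ℝ)*ε/2) := by ring
          _ ≤ (n:ℝ)/(ℓ:ℝ) * Real.log lam + (n:ℝ)*(ε/2) := by linarith
          _ = (n:ℝ) * ((1/(ℓ:ℝ)) * Real.log lam + ε/2) := by field_simp
      have hlogc : -((n:ℝ) * (ε/2)) ≤ Real.log c := by
        have h4 : 2*|Real.log c| ≤ (n:ℝ)*ε := by
          have := (div_le_iff₀ hε).mp hn2
          linarith
        have h5 := neg_abs_le (Real.log c)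
        linarith
      have hfinal : Real.log c - (n:ℝ)*((1/(ℓ:ℝ))*Real.log lam + ε/2) ≤
          Real.log (pullbackDiamSup f J n) := by linarith
      have hmul := mul_le_mul_of_nonneg_left hfinal (by positivity : (0:ℝ) ≤ 1/(n:ℝ))
      have hexpand : (1/(n:ℝ)) * (Real.log c - (n:ℝ)*((1/(ℓ:ℝ))*Real.log lam + ε/2))
          = (1/(n:ℝ)) * Real.log c - ((1/(ℓ:ℝ))*Real.log lam + ε/2) := by
        field_simp
      rw [hexpand] at hmul
      have hlogcn : -(ε/2) ≤ (1/(n:ℝ)) * Real.log c := by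
        have h6 := mul_le_mul_of_nonneg_left hlogc (by positivity : (0:ℝ) ≤ 1/(n:ℝ))
        have heq : (1/(n:ℝ)) * -((n:ℝ)*(ε/2)) = -(ε/2) := by
          rw [mul_neg, ← mul_assoc, one_div, inv_mul_cancel₀ hnne, one_mul]
        rw [heq] at h6
        exact h6
      linarith
    have h2 : ∀ ε : ℝ, 0 < ε →
        -( (1/(ℓ:ℝ)) * Real.log |deriv (f^[ℓ]) p| ) ≤
        liminf (fun n : ℕ => (1 / (n : ℝ)) * Real.log (pullbackDiamSup f J n)) atTop + ε := by
      intro ε hε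
      have h3 := le_liminf_of_le hcob (key ε hε)
      linarith
    exact le_of_forall_pos_le_add h2
end

section
/- Let f be an interval map of class C³ with non-flat critical points, topologically exact on its Julia set J(f). If p is a hyperbolic repelling periodic point of f in J(f) and x₀ ∈ J(f), then limsup_{n→∞} (1/n) ln min{|Df^n(x)| : x ∈ f^{−n}(x₀)} ≤ χ_p(f). Consequently, limsup_{n→∞} (1/n) ln min{|Df^n(x)| : x ∈ f^{−n}(x₀)} ≤ inf{χ_p(f) : p hyperbolic repelling periodic point in J(f)}. -/
open Metric Set Filter

private lemma iterContDiff {f : ℝ → ℝ} (hf : ContDiff ℝ 3 f) (n : ℕ) : ContDiff ℝ 3 (f^[n]) := by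
  induction n with
  | zero => simpa using contDiff_id
  | succ n ih => rw [Function.iterate_succ']; exact hf.comp ih

private lemma iterDiff {f : ℝ → ℝ} (hf : ContDiff ℝ 3 f) (n : ℕ) : Differentiable ℝ (f^[n]) :=
  (iterContDiff hf n).differentiable (by norm_num)

private lemma derivIterAdd {f : ℝ → ℝ} (hf : ContDiff ℝ 3 f) (i j : ℕ) (x : ℝ) :
    deriv (f^[i + j]) x = deriv (f^[i]) (f^[j] x) * deriv (f^[j]) x := by
  rw [Function.iterate_add f i j]
  exact deriv_comp x ((iterDiff hf i).differentiableAt) ((iterDiff hf j).differentiableAt)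

private lemma limsupLeOfEventually {u : ℕ → ℝ} {χ : ℝ} (hχ : 0 ≤ χ)
    (h : ∀ ε > 0, ∀ᶠ n in atTop, u n ≤ χ + ε) : limsup u atTop ≤ χ := by
  rw [limsup_eq]
  by_cases hb : BddBelow {a : ℝ | ∀ᶠ n in atTop, u n ≤ a}
  · exact le_of_forall_pos_le_add fun ε hε => csInf_le hb (h ε hε)
  · rw [Real.sInf_of_not_bddBelow hb]; exact hχ

private lemma coverLemma {F : ℝ → ℝ} (hF : Differentiable ℝ F) (hFc : Continuous (deriv F))
    {p δ μ : ℝ} (hδ : 0 < δ) (hμ : 0 < μ)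
    (hd : ∀ x ∈ Icc (p - δ) (p + δ), μ ≤ |deriv F x|)
    {y : ℝ} (hy : |y - F p| ≤ μ * δ) :
    ∃ x ∈ Icc (p - δ) (p + δ), F x = y := by
  have hpp : p ∈ Icc (p - δ) (p + δ) := ⟨by linarith, by linarith⟩
  have hle : p - δ ≤ p + δ := by linarith
  have habs := abs_le.1 hy
  have hFcont : ContinuousOn F (Icc (p - δ) (p + δ)) := hF.continuous.continuousOn
  have hdc : ContinuousOn (deriv F) (Icc (p - δ) (p + δ)) := hFc.continuousOn
  rcases lt_or_ge 0 (deriv F p) with hpos | hneg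
  · have hsign : ∀ x ∈ Icc (p - δ) (p + δ), μ ≤ deriv F x := by
      intro x hx
      rcases le_abs.1 (hd x hx) with h | h
      · exact h
      · exfalso
        have hxneg : deriv F x < 0 := by linarith
        rcases le_total x p with hxp | hxp
        · have hsub : Icc x p ⊆ Icc (p - δ) (p + δ) := Icc_subset_Icc hx.1 hpp.2
          obtain ⟨z, hz, hz0⟩ := intermediate_value_Icc hxp (hdc.mono hsub)
            (⟨hxneg.le, hpos.le⟩ : (0:ℝ) ∈ Icc (deriv F x) (deriv F p))
          have := hd z (hsub hz); rw [hz0] at this; simp at this; linarith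
        · have hsub : Icc p x ⊆ Icc (p - δ) (p + δ) := Icc_subset_Icc hpp.1 hx.2
          obtain ⟨z, hz, hz0⟩ := intermediate_value_Icc' hxp (hdc.mono hsub)
            (⟨hxneg.le, hpos.le⟩ : (0:ℝ) ∈ Icc (deriv F x) (deriv F p))
          have := hd z (hsub hz); rw [hz0] at this; simp at this; linarith
    have key := (convex_Icc (p - δ) (p + δ)).mul_sub_le_image_sub_of_le_deriv hFcont
      (hF.differentiableOn) (fun x hx => hsign x (interior_subset hx))
    have h1 := key (p - δ) ⟨le_refl _, hle⟩ p hpp (by linarith)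
    have h2 := key p hpp (p + δ) ⟨by linarith, le_refl _⟩ (by linarith)
    obtain ⟨x, hx, hxy⟩ := intermediate_value_Icc hle hFcont
      (⟨by nlinarith, by nlinarith⟩ : y ∈ Icc (F (p - δ)) (F (p + δ)))
    exact ⟨x, hx, hxy⟩
  · have hsign : ∀ x ∈ Icc (p - δ) (p + δ), deriv F x ≤ -μ := by
      intro x hx
      rcases le_abs.1 (hd x hx) with h | h
      · exfalso
        have hpneg : deriv F p < 0 := by
          rcases le_abs.1 (hd p hpp) with h' | h'
          · linarith
          · linarith
        rcases le_total x p with hxp | hxp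
        · have hsub : Icc x p ⊆ Icc (p - δ) (p + δ) := Icc_subset_Icc hx.1 hpp.2
          obtain ⟨z, hz, hz0⟩ := intermediate_value_Icc' hxp (hdc.mono hsub)
            (⟨hpneg.le, by linarith⟩ : (0:ℝ) ∈ Icc (deriv F p) (deriv F x))
          have := hd z (hsub hz); rw [hz0] at this; simp at this; linarith
        · have hsub : Icc p x ⊆ Icc (p - δ) (p + δ) := Icc_subset_Icc hpp.1 hx.2
          obtain ⟨z, hz, hz0⟩ := intermediate_value_Icc hxp (hdc.mono hsub)
            (⟨hpneg.le, by linarith⟩ : (0:ℝ) ∈ Icc (deriv F p) (deriv F x))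
          have := hd z (hsub hz); rw [hz0] at this; simp at this; linarith
      · linarith
    have hGsign : ∀ x ∈ Icc (p - δ) (p + δ), μ ≤ deriv (fun t => -F t) x := by
      intro x hx; show μ ≤ deriv (-F) x; rw [deriv.neg]; linarith [hsign x hx]
    have key := (convex_Icc (p - δ) (p + δ)).mul_sub_le_image_sub_of_le_deriv
      (hFcont.neg) (hF.neg.differentiableOn)
      (fun x hx => hGsign x (interior_subset hx))
    have h1 := key (p - δ) ⟨le_refl _, hle⟩ p hpp (by linarith)
    have h2 := key p hpp (p + δ) ⟨by linarith, le_refl _⟩ (by linarith)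
    simp only [Pi.neg_apply] at h1 h2
    obtain ⟨x, hx, hxy⟩ := intermediate_value_Icc' hle hFcont
      (⟨by nlinarith, by nlinarith⟩ : y ∈ Icc (F (p + δ)) (F (p - δ)))
    exact ⟨x, hx, hxy⟩

/-- The minimal derivative `min{|Df^n(x)| : x ∈ f^{-n}(x₀)}` over the `n`-th preimages. -/
noncomputable def preimageDerivMin (f : ℝ → ℝ) (x₀ : ℝ) (n : ℕ) : ℝ :=
  sInf ((fun x => |deriv (f^[n]) x|) '' (f^[n] ⁻¹' {x₀}))

private lemma keyLemma
    (a b : ℝ) (f : ℝ → ℝ) (hf : ContDiff ℝ 3 f)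
    (Jf : Set ℝ) (hJfinv : f ⁻¹' Jf = Jf) (hJfnt : ¬ Jf.Subsingleton)
    (hexact : ∀ U : Set ℝ, IsOpen U → (U ∩ Jf).Nonempty →
      ∃ n : ℕ, f^[n] '' (U ∩ Icc a b) = Jf)
    (p : ℝ) (hp : p ∈ Jf) (ℓ : ℕ) (hℓ : 1 ≤ ℓ) (hper : f^[ℓ] p = p)
    (hrep : 1 < |deriv (f^[ℓ]) p|)
    (x₀ : ℝ) (hx₀ : x₀ ∈ Jf) :
    Filter.limsup (fun n : ℕ => (1 / (n : ℝ)) * Real.log (preimageDerivMin f x₀ n))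
        Filter.atTop ≤ (1 / (ℓ : ℝ)) * Real.log |deriv (f^[ℓ]) p| := by
  have hℓ0 : 0 < ℓ := hℓ
  have hℓR : (0:ℝ) < (ℓ:ℝ) := by exact_mod_cast hℓ0
  set lam := |deriv (f^[ℓ]) p| with hlamdef
  have hlam1 : 1 < lam := hrep
  have hlam0 : 0 < lam := by linarith
  have hχ : 0 ≤ (1 / (ℓ:ℝ)) * Real.log lam := by
    have := Real.log_pos hlam1
    positivity
  -- the image of Jf under f is Jf
  have himgJ : f '' Jf = Jf := by
    apply Subset.antisymm
    · rintro _ ⟨z, hz, rfl⟩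
      rw [← hJfinv] at hz; exact hz
    · rw [Set.not_subsingleton_iff] at hJfnt
      obtain ⟨u, hu, v, hv, huv⟩ := hJfnt
      have hduv : 0 < dist u v := dist_pos.2 huv
      obtain ⟨n, hn⟩ := hexact (ball u (dist u v / 2)) isOpen_ball
        ⟨u, mem_ball_self (by linarith), hu⟩
      match n, hn with
      | 0, hn =>
        exfalso
        simp only [Function.iterate_zero, Set.image_id] at hn
        have hv' : v ∈ ball u (dist u v / 2) ∩ Icc a b := hn.symm ▸ hv
        have := mem_ball.1 hv'.1
        rw [dist_comm] at this; linarith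
      | (n+1), hn =>
        intro y hy
        have hy' := hy
        rw [← hn] at hy'
        obtain ⟨w, hw, hwy⟩ := hy'
        rw [Function.iterate_succ_apply'] at hwy
        refine ⟨f^[n] w, ?_, hwy⟩
        rw [← hJfinv]
        show f (f^[n] w) ∈ Jf
        rw [hwy]; exact hy
  apply limsupLeOfEventually hχ
  intro ε hε
  -- upper derivative bound Λ and lower expansion bound μ on a small ball around p
  set Λ : ℝ := lam * Real.exp ((ℓ:ℝ) * ε / 2) with hΛdef
  have hexp1 : 1 < Real.exp ((ℓ:ℝ) * ε / 2) := by rw [Real.one_lt_exp_iff]; positivity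
  have hΛlam : lam < Λ := by nlinarith
  have hΛ1 : 1 < Λ := by linarith
  have hΛ0 : 0 < Λ := by linarith
  set μ : ℝ := (1 + lam) / 2 with hμdef
  have hμ1 : 1 < μ := by simp only [hμdef]; linarith
  have hμlam : μ < lam := by simp only [hμdef]; linarith
  have hμ0 : 0 < μ := by linarith
  have hcd : Continuous (deriv (f^[ℓ])) := (iterContDiff hf ℓ).continuous_deriv (by norm_num)
  have hcabs : Continuous fun x => |deriv (f^[ℓ]) x| := hcd.abs
  have hopen : IsOpen {x : ℝ | μ < |deriv (f^[ℓ]) x| ∧ |deriv (f^[ℓ]) x| < Λ} :=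
    (isOpen_lt continuous_const hcabs).inter (isOpen_lt hcabs continuous_const)
  obtain ⟨δ', hδ', hball⟩ := Metric.isOpen_iff.1 hopen p ⟨hμlam, hΛlam⟩
  set δ : ℝ := δ' / 2 with hδdef
  have hδ : 0 < δ := by simp only [hδdef]; linarith
  have hcbsub : closedBall p δ ⊆ ball p δ' := closedBall_subset_ball (by simp only [hδdef]; linarith)
  have hbd : ∀ x ∈ closedBall p δ, μ ≤ |deriv (f^[ℓ]) x| ∧ |deriv (f^[ℓ]) x| ≤ Λ :=
    fun x hx => ⟨(hball (hcbsub hx)).1.le, (hball (hcbsub hx)).2.le⟩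
  -- exactness: every large-time image of the ball is Jf
  obtain ⟨n₀, hn₀⟩ := hexact (ball p δ) isOpen_ball ⟨p, mem_ball_self hδ, hp⟩
  have himg : ∀ j : ℕ, f^[n₀ + j] '' (ball p δ ∩ Icc a b) = Jf := by
    intro j
    induction j with
    | zero => simpa using hn₀
    | succ j ih =>
      have : n₀ + (j + 1) = (n₀ + j) + 1 := by omega
      rw [this, Function.iterate_succ', Set.image_comp, ih, himgJ]
  -- preimages of x₀ near p at every time n₀ + j
  have hyex : ∀ j : ℕ, ∃ z, z ∈ closedBall p δ ∧ f^[n₀ + j] z = x₀ := by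
    intro j
    have hx₀' : x₀ ∈ f^[n₀ + j] '' (ball p δ ∩ Icc a b) := (himg j).symm ▸ hx₀
    obtain ⟨w, ⟨hw1, _⟩, hw2⟩ := hx₀'
    exact ⟨w, ball_subset_closedBall hw1, hw2⟩
  choose y hy1 hy2 using hyex
  -- pull back y j along the periodic orbit
  have hchain : ∀ (j k : ℕ), ∃ z ∈ closedBall p δ,
      f^[k * ℓ] z = y j ∧ |deriv (f^[k * ℓ]) z| ≤ Λ ^ k := by
    intro j k
    induction k with
    | zero =>
      refine ⟨y j, hy1 j, by simp, ?_⟩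
      simp [Nat.zero_mul, Function.iterate_zero]
    | succ k ih =>
      obtain ⟨z, hz, hz1, hz2⟩ := ih
      have hd' : ∀ x ∈ Icc (p - δ) (p + δ), μ ≤ |deriv (f^[ℓ]) x| := by
        intro x hx
        exact (hbd x (Real.closedBall_eq_Icc ▸ hx)).1
      have hzp : |z - f^[ℓ] p| ≤ μ * δ := by
        rw [hper]
        have := mem_closedBall.1 hz
        rw [Real.dist_eq] at this
        nlinarith
      obtain ⟨x, hx, hxz⟩ := coverLemma (iterDiff hf ℓ) hcd hδ hμ0 hd' hzp
      have hxcb : x ∈ closedBall p δ := Real.closedBall_eq_Icc ▸ hx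
      refine ⟨x, hxcb, ?_, ?_⟩
      · rw [Nat.succ_mul, Function.iterate_add_apply, hxz, hz1]
      · rw [Nat.succ_mul, derivIterAdd hf (k * ℓ) ℓ x, abs_mul, hxz]
        calc |deriv (f^[k * ℓ]) z| * |deriv (f^[ℓ]) x| ≤ Λ ^ k * Λ :=
              mul_le_mul hz2 (hbd x hxcb).2 (abs_nonneg _) (by positivity)
          _ = Λ ^ (k + 1) := (pow_succ Λ k).symm
  -- the constant C
  set C : ℝ := 1 + ∑ j ∈ Finset.range ℓ, |deriv (f^[n₀ + j]) (y j)| with hCdef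
  have hsumnn : 0 ≤ ∑ j ∈ Finset.range ℓ, |deriv (f^[n₀ + j]) (y j)| :=
    Finset.sum_nonneg fun i _ => abs_nonneg _
  have hC1 : 1 ≤ C := by simp only [hCdef]; linarith
  have hC0 : 0 < C := by linarith
  have hCj : ∀ j, j < ℓ → |deriv (f^[n₀ + j]) (y j)| ≤ C := by
    intro j hj
    have := Finset.single_le_sum (f := fun i => |deriv (f^[n₀ + i]) (y i)|)
      (fun i _ => abs_nonneg _) (Finset.mem_range.2 hj)
    simp only [hCdef]; linarith
  have hlogC : 0 ≤ Real.log C := Real.log_nonneg hC1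
  have hlogΛ : 0 ≤ Real.log Λ := Real.log_nonneg hΛ1.le
  -- eventual bound
  rw [eventually_atTop]
  refine ⟨max (n₀ + 1) (⌈2 * Real.log C / ε⌉₊ + 1), fun n hn => ?_⟩
  have hn1 : n₀ + 1 ≤ n := le_trans (le_max_left _ _) hn
  have hn2 : (⌈2 * Real.log C / ε⌉₊ : ℝ) + 1 ≤ (n : ℝ) := by exact_mod_cast le_trans (le_max_right _ _) hn
  have hn0 : 0 < n := by omega
  have hnR : (0:ℝ) < (n : ℝ) := by exact_mod_cast hn0
  have hn' : n₀ ≤ n := by omega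
  -- decompose n = (n₀ + r) + k * ℓ
  obtain ⟨k, r, hrℓ, hnk⟩ : ∃ k r, r < ℓ ∧ n = (n₀ + r) + k * ℓ := by
    refine ⟨(n - n₀) / ℓ, (n - n₀) % ℓ, Nat.mod_lt _ hℓ0, ?_⟩
    have h := Nat.div_add_mod (n - n₀) ℓ
    calc n = n - n₀ + n₀ := (Nat.sub_add_cancel hn').symm
      _ = (ℓ * ((n - n₀) / ℓ) + (n - n₀) % ℓ) + n₀ := by rw [h]
      _ = (n₀ + (n - n₀) % ℓ) + (n - n₀) / ℓ * ℓ := by ring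
  obtain ⟨z, hzb, hz1, hz2⟩ := hchain r k
  have hzx : f^[n] z = x₀ := by
    rw [hnk, Function.iterate_add_apply, hz1, hy2]
  have hdz : |deriv (f^[n]) z| ≤ C * Λ ^ k := by
    rw [hnk, derivIterAdd hf (n₀ + r) (k * ℓ) z, abs_mul, hz1]
    exact mul_le_mul (hCj r hrℓ) hz2 (abs_nonneg _) (le_of_lt hC0)
  have hmem : |deriv (f^[n]) z| ∈ (fun x => |deriv (f^[n]) x|) '' (f^[n] ⁻¹' {x₀}) :=
    ⟨z, by simpa using hzx, rfl⟩
  have hbdd : BddBelow ((fun x => |deriv (f^[n]) x|) '' (f^[n] ⁻¹' {x₀})) :=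
    ⟨0, by rintro t ⟨w, _, rfl⟩; exact abs_nonneg _⟩
  have hpdm_le : preimageDerivMin f x₀ n ≤ C * Λ ^ k :=
    le_trans (csInf_le hbdd hmem) hdz
  have hpdm0 : 0 ≤ preimageDerivMin f x₀ n :=
    Real.sInf_nonneg (by rintro t ⟨w, _, rfl⟩; exact abs_nonneg _)
  rcases eq_or_lt_of_le hpdm0 with h0 | hpos
  · rw [← h0, Real.log_zero, mul_zero]
    have := Real.log_pos hlam1
    positivity
  · have hkℓn : (k : ℝ) * (ℓ : ℝ) ≤ (n : ℝ) := by
      have : k * ℓ ≤ n := hnk ▸ Nat.le_add_left _ _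
      exact_mod_cast this
    have hlog : Real.log (preimageDerivMin f x₀ n) ≤ Real.log C + (k : ℝ) * Real.log Λ := by
      calc Real.log (preimageDerivMin f x₀ n) ≤ Real.log (C * Λ ^ k) :=
            Real.log_le_log hpos hpdm_le
        _ = Real.log C + Real.log (Λ ^ k) :=
            Real.log_mul (ne_of_gt hC0) (pow_ne_zero _ (ne_of_gt hΛ0))
        _ = Real.log C + (k : ℝ) * Real.log Λ := by rw [Real.log_pow]
    have h3 : (1 / (n:ℝ)) * Real.log C ≤ ε / 2 := by
      rw [one_div, inv_mul_le_iff₀ hnR]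
      have hceil : 2 * Real.log C / ε ≤ (⌈2 * Real.log C / ε⌉₊ : ℝ) := Nat.le_ceil _
      have h2lc : 2 * Real.log C ≤ (n : ℝ) * ε := by
        have : 2 * Real.log C / ε ≤ (n : ℝ) := by linarith
        calc 2 * Real.log C = (2 * Real.log C / ε) * ε := by field_simp
          _ ≤ (n : ℝ) * ε := mul_le_mul_of_nonneg_right this hε.le
      linarith
    have h2 : (1 / (n:ℝ)) * ((k:ℝ) * Real.log Λ) ≤ (1 / (ℓ:ℝ)) * Real.log Λ := by
      rw [div_mul_eq_mul_div, div_mul_eq_mul_div, div_le_div_iff₀ hnR hℓR]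
      have hmul := mul_le_mul_of_nonneg_right hkℓn hlogΛ
      linarith [hmul]
    have h4 : (1 / (ℓ:ℝ)) * Real.log Λ = (1 / (ℓ:ℝ)) * Real.log lam + ε / 2 := by
      rw [hΛdef, Real.log_mul (ne_of_gt hlam0) (ne_of_gt (Real.exp_pos _)), Real.log_exp]
      field_simp
    calc (1 / (n:ℝ)) * Real.log (preimageDerivMin f x₀ n)
        ≤ (1 / (n:ℝ)) * (Real.log C + (k:ℝ) * Real.log Λ) :=
          mul_le_mul_of_nonneg_left hlog (by positivity)
      _ = (1 / (n:ℝ)) * Real.log C + (1 / (n:ℝ)) * ((k:ℝ) * Real.log Λ) := by ring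
      _ ≤ ε / 2 + (1 / (ℓ:ℝ)) * Real.log Λ := add_le_add h3 h2
      _ = (1 / (ℓ:ℝ)) * Real.log lam + ε := by rw [h4]; ring

/-- For a `C³` interval map with non-flat critical points, topologically exact
on its Julia set `Jf`, and for any hyperbolic repelling periodic point `p ∈ Jf` of period
`ℓ` and any `x₀ ∈ Jf`:
`limsup (1/n) ln min{|Df^n(x)| : x ∈ f^{-n}(x₀)} ≤ χ_p(f)`;
consequently the limsup is at most the infimum of the exponents of all hyperbolic
repelling periodic points in `Jf`. -/
theorem limsup_min_deriv_le_periodic_exponent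
    (a b : ℝ) (hab : a < b) (f : ℝ → ℝ)
    (hf : ContDiff ℝ 3 f) (hmaps : MapsTo f (Icc a b) (Icc a b))
    (hnonflat : ∀ c ∈ Icc a b, deriv f c = 0 → ∃ k : ℕ, 2 ≤ k ∧ iteratedDeriv k f c ≠ 0)
    (Jf : Set ℝ) (hJfI : Jf ⊆ Icc a b) (hJfinv : f ⁻¹' Jf = Jf)
    (hJfnt : ¬ Jf.Subsingleton)
    (hexact : ∀ U : Set ℝ, IsOpen U → (U ∩ Jf).Nonempty →
      ∃ n : ℕ, f^[n] '' (U ∩ Icc a b) = Jf)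
    (p : ℝ) (hp : p ∈ Jf) (ℓ : ℕ) (hℓ : 1 ≤ ℓ) (hper : f^[ℓ] p = p)
    (hrep : 1 < |deriv (f^[ℓ]) p|)
    (x₀ : ℝ) (hx₀ : x₀ ∈ Jf) :
    Filter.limsup (fun n : ℕ => (1 / (n : ℝ)) * Real.log (preimageDerivMin f x₀ n))
        Filter.atTop ≤ (1 / (ℓ : ℝ)) * Real.log |deriv (f^[ℓ]) p| ∧
    Filter.limsup (fun n : ℕ => (1 / (n : ℝ)) * Real.log (preimageDerivMin f x₀ n))
        Filter.atTop ≤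
      sInf {χ : ℝ | ∃ q ∈ Jf, ∃ m : ℕ, 1 ≤ m ∧ f^[m] q = q ∧ 1 < |deriv (f^[m]) q| ∧
        χ = (1 / (m : ℝ)) * Real.log |deriv (f^[m]) q|} := by
  constructor
  · exact keyLemma a b f hf Jf hJfinv hJfnt hexact p hp ℓ hℓ hper hrep x₀ hx₀
  · refine le_csInf ⟨_, ⟨p, hp, ℓ, hℓ, hper, hrep, rfl⟩⟩ ?_
    rintro χ ⟨q, hq, m, hm, hqper, hqrep, rfl⟩
    exact keyLemma a b f hf Jf hJfinv hJfnt hexact q hq m hm hqper hqrep x₀ hx₀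
end

section
/- Let f : I → I be a continuously differentiable interval map and ν an ergodic f-invariant probability measure with finite Lyapunov exponent χ_ν(f) = ∫ ln|Df| dν ≥ 0. Assume there is C₀ > 0 with |Df(x)| ≤ C₀ dist(x, Crit(f)) for all x. Then for every ε > 0 there is a point x in J := supp(ν) such that for every sufficiently large n: f^n(B(x, exp(−(χ_ν(f) + 2ε)n))) ⊆ B(f^n(x), exp(−εn)). -/
open MeasureTheory Metric Set Filter

set_option linter.unusedSectionVars false

section Maximal

variable {α : Type*} [MeasurableSpace α] {f : α → α} {ν : Measure α}

/-- running maximum of Birkhoff sums, `M N x = max_{0 ≤ k ≤ N} S_k x` (with `S_0 = 0`). -/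
noncomputable def birkMax (f : α → α) (φ : α → ℝ) : ℕ → α → ℝ
  | 0 => fun _ => 0
  | (N+1) => fun x => max (birkMax f φ N x) (birkhoffSum f φ (N+1) x)

lemma birkMax_nonneg (φ : α → ℝ) (N : ℕ) (x : α) : 0 ≤ birkMax f φ N x := by
  induction N with
  | zero => simp [birkMax]
  | succ N ih => exact le_trans ih (le_max_left _ _)

lemma birkMax_mono (φ : α → ℝ) {N N' : ℕ} (h : N ≤ N') (x : α) :
    birkMax f φ N x ≤ birkMax f φ N' x := by
  induction N' with
  | zero => simp_all
  | succ N' ih =>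
    rcases Nat.lt_or_ge N (N'+1) with h' | h'
    · exact le_trans (ih (Nat.lt_succ_iff.mp h')) (le_max_left _ _)
    · have : N = N' + 1 := le_antisymm h h'
      subst this; rfl

lemma birkhoffSum_le_birkMax (φ : α → ℝ) {k N : ℕ} (h : k ≤ N) (x : α) :
    birkhoffSum f φ k x ≤ birkMax f φ N x := by
  induction N with
  | zero =>
    interval_cases k
    simp [birkMax, birkhoffSum_zero]
  | succ N ih =>
    rcases Nat.lt_or_ge k (N+1) with h' | h'
    · exact le_trans (ih (Nat.lt_succ_iff.mp h')) (le_max_left _ _)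
    · have : k = N + 1 := le_antisymm h h'
      subst this; exact le_max_right _ _

lemma abs_birkhoffSum_le (φ : α → ℝ) {K : ℝ} (hK : ∀ x, |φ x| ≤ K) (k : ℕ) (x : α) :
    |birkhoffSum f φ k x| ≤ K * k := by
  calc |birkhoffSum f φ k x| ≤ ∑ i ∈ Finset.range k, |φ (f^[i] x)| :=
        Finset.abs_sum_le_sum_abs _ _
    _ ≤ ∑ _i ∈ Finset.range k, K := Finset.sum_le_sum fun i _ => hK _
    _ = K * k := by simp [mul_comm]

lemma birkMax_le (φ : α → ℝ) {K : ℝ} (hK : ∀ x, |φ x| ≤ K) (N : ℕ) (x : α) :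
    birkMax f φ N x ≤ K * N := by
  have hK0 : 0 ≤ K := le_trans (abs_nonneg _) (hK x)
  induction N with
  | zero => simp [birkMax]
  | succ N ih =>
    refine max_le (le_trans ih ?_) ?_
    · exact mul_le_mul_of_nonneg_left (by exact_mod_cast Nat.le_succ N) hK0
    · exact le_trans (le_abs_self _) (abs_birkhoffSum_le φ hK _ x)

lemma birkMax_measurable (hf : Measurable f) {φ : α → ℝ}
    (hφ : Measurable φ) (N : ℕ) : Measurable (birkMax f φ N) := by
  induction N with
  | zero =>
    simp only [birkMax]
    exact measurable_const
  | succ N ih =>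
    exact ih.max (Finset.measurable_sum _ fun k _ => hφ.comp (hf.iterate k))

lemma birkMax_key (φ : α → ℝ) (N : ℕ) (x : α) :
    birkMax f φ N x ≤ max 0 (φ x + birkMax f φ N (f x)) := by
  induction N with
  | zero => simp [birkMax]
  | succ N ih =>
    refine max_le (le_trans ih ?_) ?_
    · exact max_le_max le_rfl (add_le_add le_rfl (birkMax_mono φ (Nat.le_succ N) (f x)))
    · refine le_trans ?_ (le_max_right _ _)
      rw [birkhoffSum_succ']
      exact add_le_add le_rfl (birkhoffSum_le_birkMax φ (Nat.le_succ N) (f x))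

/-- Maximal ergodic theorem (Garsia's proof). -/
lemma maximal_ergodic (hpres : MeasurePreserving f ν ν) [IsProbabilityMeasure ν]
    {φ : α → ℝ} (hφ : Measurable φ) {K : ℝ} (hK : ∀ x, |φ x| ≤ K) (N : ℕ) :
    0 ≤ ∫ x in {x | 0 < birkMax f φ N x}, φ x ∂ν := by
  have hfm : Measurable f := hpres.measurable
  set M : α → ℝ := birkMax f φ N with hM
  have hMm : Measurable M := birkMax_measurable hfm hφ N
  have hMb : ∀ x, |M x| ≤ K * N := by
    intro x
    have h0 := birkMax_nonneg (f := f) φ N x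
    have hK0 : 0 ≤ K := le_trans (abs_nonneg _) (hK x)
    have hKN : (0:ℝ) ≤ K * N := by positivity
    rw [abs_le]
    exact ⟨by linarith, birkMax_le φ hK N x⟩
  have hbdd_int : ∀ (g : α → ℝ), Measurable g → (∀ x, |g x| ≤ K * N) → Integrable g ν := by
    intro g hg hb
    exact Integrable.mono' (integrable_const (K * N)) hg.aestronglyMeasurable
      (Eventually.of_forall fun x => by simpa [Real.norm_eq_abs] using hb x)
  have hφint : Integrable φ ν :=
    Integrable.mono' (integrable_const K) hφ.aestronglyMeasurable
      (Eventually.of_forall fun x => by simpa [Real.norm_eq_abs] using hK x)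
  have hMint : Integrable M ν := hbdd_int M hMm hMb
  have hMfm : Measurable (fun x => M (f x)) := hMm.comp hfm
  have hMfint : Integrable (fun x => M (f x)) ν := hbdd_int _ hMfm (fun x => hMb (f x))
  set E : Set α := {x | 0 < M x} with hE
  have hEmeas : MeasurableSet E := measurableSet_lt measurable_const hMm
  -- pointwise inequality on E
  have hptE : ∀ x ∈ E, M x - M (f x) ≤ φ x := by
    intro x hx
    have h1 := birkMax_key (f := f) φ N x
    have h2 : (0 : ℝ) < M x := hx
    rcases max_cases (0 : ℝ) (φ x + M (f x)) with ⟨he, _⟩ | ⟨he, _⟩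
    · rw [he] at h1; linarith
    · rw [he] at h1; linarith
  -- pointwise on complement: M x = 0
  have hptEc : ∀ x ∈ Eᶜ, M x - M (f x) ≤ 0 := by
    intro x hx
    have h0 : M x ≤ 0 := not_lt.1 hx
    have := birkMax_nonneg (f := f) φ N (f x)
    linarith
  -- ∫ (M - M∘f) = 0
  have hinv : ∫ x, M (f x) ∂ν = ∫ x, M x ∂ν := by
    conv_rhs => rw [← hpres.map_eq]
    exact (integral_map hfm.aemeasurable hMm.aestronglyMeasurable).symm
  have hdiffint : Integrable (fun x => M x - M (f x)) ν := hMint.sub hMfint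
  have htot : ∫ x, (M x - M (f x)) ∂ν = 0 := by
    rw [integral_sub hMint hMfint, hinv, sub_self]
  have hsplit : ∫ x in E, (M x - M (f x)) ∂ν + ∫ x in Eᶜ, (M x - M (f x)) ∂ν
      = ∫ x, (M x - M (f x)) ∂ν := integral_add_compl hEmeas hdiffint
  have hcompl_nonpos : ∫ x in Eᶜ, (M x - M (f x)) ∂ν ≤ 0 := by
    apply setIntegral_nonpos hEmeas.compl
    exact fun x hx => hptEc x hx
  have hE_ge : 0 ≤ ∫ x in E, (M x - M (f x)) ∂ν := by linarith [hsplit, htot, hcompl_nonpos]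
  calc (0:ℝ) ≤ ∫ x in E, (M x - M (f x)) ∂ν := hE_ge
    _ ≤ ∫ x in E, φ x ∂ν := by
        apply setIntegral_mono_on hdiffint.integrableOn hφint.integrableOn hEmeas
        exact hptE

end Maximal

section UB

variable {α : Type*} [MeasurableSpace α] {f : α → α} {ν : Measure α}

lemma birkhoffSum_measurable (hf : Measurable f) {φ : α → ℝ} (hφ : Measurable φ) (n : ℕ) :
    Measurable (birkhoffSum f φ n) :=
  Finset.measurable_sum _ fun k _ => hφ.comp (hf.iterate k)

lemma birkhoffSum_sub_const (f : α → α) (φ : α → ℝ) (c : ℝ) (n : ℕ) (x : α) :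
    birkhoffSum f (fun y => φ y - c) n x = birkhoffSum f φ n x - n * c := by
  simp [birkhoffSum, Finset.sum_sub_distrib, mul_comm]

/-- "Upper half" of the Birkhoff ergodic theorem, for bounded measurable `φ`. -/
lemma birkhoff_upper (herg : Ergodic f ν) [IsProbabilityMeasure ν]
    {φ : α → ℝ} (hφ : Measurable φ) {K : ℝ} (hK : ∀ x, |φ x| ≤ K) {c : ℝ}
    (hc : ∫ x, φ x ∂ν < c) :
    ∀ᵐ x ∂ν, ∃ N : ℕ, ∀ n, N ≤ n → birkhoffSum f φ n x ≤ c * n := by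
  have hpres : MeasurePreserving f ν ν := herg.toMeasurePreserving
  have hfm : Measurable f := hpres.measurable
  set c' : ℝ := ((∫ x, φ x ∂ν) + c)/2 with hc'def
  have hc'1 : ∫ x, φ x ∂ν < c' := by rw [hc'def]; linarith
  have hc'2 : c' < c := by rw [hc'def]; linarith
  set δ : ℝ := c - c' with hδdef
  have hδ : 0 < δ := by rw [hδdef]; linarith
  set ψ : α → ℝ := fun y => φ y - c' with hψdef
  have hψm : Measurable ψ := hφ.sub measurable_const
  set K' : ℝ := K + |c'| with hK'def
  have hK' : ∀ x, |ψ x| ≤ K' := by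
    intro x
    calc |ψ x| ≤ |φ x| + |c'| := abs_sub _ _
      _ ≤ K + |c'| := by linarith [hK x]
  have hφint : Integrable φ ν :=
    Integrable.mono' (integrable_const K) hφ.aestronglyMeasurable
      (Eventually.of_forall fun x => by simpa [Real.norm_eq_abs] using hK x)
  have hψint : Integrable ψ ν := hφint.sub (integrable_const c')
  have hψneg : ∫ x, ψ x ∂ν < 0 := by
    rw [hψdef]
    simp only []
    rw [integral_sub hφint (integrable_const c'), integral_const]
    simp [measure_univ]
    linarith
  -- the frequently-above-slope-q sets
  set S : ℕ → α → ℝ := fun n x => birkhoffSum f ψ n x with hSdef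
  set F : ℚ → Set α := fun q =>
    ⋂ (N : ℕ), ⋃ (n : ℕ), ⋃ (_ : N ≤ n), {x | (q : ℝ) * n < S n x} with hFdef
  have hFmem : ∀ (q : ℚ) (x : α), x ∈ F q ↔ ∀ N : ℕ, ∃ n, N ≤ n ∧ (q : ℝ) * n < S n x := by
    intro q x
    simp [hFdef, mem_iInter, mem_iUnion]
  have hFmeas : ∀ q : ℚ, MeasurableSet (F q) := by
    intro q
    apply MeasurableSet.iInter; intro N
    apply MeasurableSet.iUnion; intro n
    apply MeasurableSet.iUnion; intro _
    exact measurableSet_lt measurable_const (birkhoffSum_measurable hfm hψm n)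
  -- transfer claims
  have claim1 : ∀ (q q' : ℚ), 0 < (q' : ℝ) → (q' : ℝ) < q → ∀ x, x ∈ F q → f x ∈ F q' := by
    intro q q' hq' hqq' x hx
    rw [hFmem] at hx ⊢
    intro N
    obtain ⟨m₀, hm₀⟩ := exists_nat_ge ((K' + |(q:ℝ)|) / ((q:ℝ) - q'))
    obtain ⟨n, hn1, hn2⟩ := hx (max (N + 1) (m₀ + 1))
    obtain ⟨m, rfl⟩ : ∃ m, n = m + 1 := by
      refine ⟨n - 1, ?_⟩
      have : 1 ≤ n := le_trans (le_trans (Nat.le_add_left 1 N) (le_max_left _ _)) hn1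
      omega
    have hmN : N ≤ m := by
      have := le_trans (le_max_left (N+1) (m₀+1)) hn1; omega
    have hmm₀ : (m₀ : ℝ) ≤ m := by
      have : m₀ ≤ m := by have := le_trans (le_max_right (N+1) (m₀+1)) hn1; omega
      exact_mod_cast this
    refine ⟨m, hmN, ?_⟩
    have hrel : S (m+1) x = ψ x + S m (f x) := birkhoffSum_succ' f ψ m x
    have hψx : |ψ x| ≤ K' := hK' x
    have hm_big : (K' + |(q:ℝ)|) ≤ ((q:ℝ) - q') * m := by
      rw [div_le_iff₀ (by linarith)] at hm₀
      calc (K' + |(q:ℝ)|) ≤ ((q:ℝ) - q') * m₀ := by linarith [hm₀]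
        _ ≤ ((q:ℝ) - q') * m := by
            apply mul_le_mul_of_nonneg_left hmm₀ (by linarith)
    have habs1 : ψ x ≤ K' := by rw [abs_le] at hψx; linarith [hψx.2]
    have habsq : -|(q:ℝ)| ≤ (q:ℝ) := neg_abs_le _
    have hcast : ((m+1 : ℕ) : ℝ) = (m : ℝ) + 1 := by push_cast; ring
    have hlt : (q:ℝ) * ((m:ℝ)+1) < S (m+1) x := by rw [← hcast]; exact hn2
    have hid : ((q:ℝ) - q') * m = (q:ℝ) * m - (q':ℝ) * m := by ring
    have hid2 : (q:ℝ) * ((m:ℝ)+1) = (q:ℝ) * m + q := by ring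
    rw [hrel] at hlt
    linarith
  have claim2 : ∀ (q q' : ℚ), 0 < (q' : ℝ) → (q' : ℝ) < q → ∀ x, f x ∈ F q → x ∈ F q' := by
    intro q q' hq' hqq' x hx
    rw [hFmem] at hx ⊢
    intro N
    obtain ⟨m₀, hm₀⟩ := exists_nat_ge ((K' + |(q':ℝ)|) / ((q:ℝ) - q'))
    obtain ⟨n, hn1, hn2⟩ := hx (max N m₀)
    refine ⟨n + 1, le_trans (le_trans (le_max_left N m₀) hn1) (Nat.le_succ n), ?_⟩
    have hrel : S (n+1) x = ψ x + S n (f x) := birkhoffSum_succ' f ψ n x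
    have hψx : |ψ x| ≤ K' := hK' x
    have hnm₀ : (m₀ : ℝ) ≤ n := by exact_mod_cast le_trans (le_max_right N m₀) hn1
    have hm_big : (K' + |(q':ℝ)|) ≤ ((q:ℝ) - q') * n := by
      rw [div_le_iff₀ (by linarith)] at hm₀
      calc (K' + |(q':ℝ)|) ≤ ((q:ℝ) - q') * m₀ := by linarith [hm₀]
        _ ≤ ((q:ℝ) - q') * n := mul_le_mul_of_nonneg_left hnm₀ (by linarith)
    have habs1 : -(K') ≤ ψ x := by rw [abs_le] at hψx; linarith [hψx.1]
    have habsq : (q':ℝ) ≤ |(q':ℝ)| := le_abs_self _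
    have hcast : ((n+1 : ℕ) : ℝ) = (n : ℝ) + 1 := by push_cast; ring
    have hid : ((q:ℝ) - q') * n = (q:ℝ) * n - (q':ℝ) * n := by ring
    rw [hcast, hrel]
    linarith
  set A : Set α := ⋃ (q : ℚ), ⋃ (_ : 0 < (q : ℝ)), F q with hAdef
  have hAmeas : MeasurableSet A := by
    apply MeasurableSet.iUnion; intro q
    apply MeasurableSet.iUnion; intro _
    exact hFmeas q
  have hAmem : ∀ x, x ∈ A ↔ ∃ q : ℚ, 0 < (q:ℝ) ∧ x ∈ F q := by
    intro x; simp [hAdef, mem_iUnion]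
  have hAinv : f ⁻¹' A = A := by
    ext x
    simp only [mem_preimage]
    rw [hAmem, hAmem]
    constructor
    · rintro ⟨q, hq, hx⟩
      refine ⟨q/2, by push_cast; linarith, claim2 q (q/2) (by push_cast; linarith)
        (by push_cast; linarith) x hx⟩
    · rintro ⟨q, hq, hx⟩
      refine ⟨q/2, by push_cast; linarith, claim1 q (q/2) (by push_cast; linarith)
        (by push_cast; linarith) x hx⟩
  rcases herg.toPreErgodic.ae_empty_or_univ hAmeas hAinv with hA0 | hA1
  · -- ν A = 0 : good case
    have hνA : ν A = 0 := by
      have := measure_congr hA0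
      simpa using this
    have : ∀ᵐ x ∂ν, x ∉ A := by
      rw [ae_iff]
      convert hνA using 2
      simp
    filter_upwards [this] with x hxA
    obtain ⟨q, hq1, hq2⟩ := exists_rat_btwn hδ
    have hq0 : 0 < (q:ℝ) := hq1
    have hxF : x ∉ F q := fun hF => hxA ((hAmem x).2 ⟨q, hq0, hF⟩)
    rw [hFmem] at hxF
    push_neg at hxF
    obtain ⟨N, hN⟩ := hxF
    refine ⟨N, fun n hn => ?_⟩
    have h1 : S n x ≤ (q:ℝ) * n := hN n hn
    have h2 : S n x = birkhoffSum f φ n x - n * c' := birkhoffSum_sub_const f φ c' n x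
    have hn0 : (0:ℝ) ≤ n := Nat.cast_nonneg n
    nlinarith [h1, h2]
  · -- ν A = 1 : contradiction with maximal ergodic theorem
    exfalso
    have hνA : ν A = 1 := by
      have := measure_congr hA1
      simpa [measure_univ] using this
    set EN : ℕ → Set α := fun N => {x | 0 < birkMax f ψ N x} with hENdef
    have hENmeas : ∀ N, MeasurableSet (EN N) :=
      fun N => measurableSet_lt measurable_const (birkMax_measurable hfm hψm N)
    have hENmono : Monotone EN := by
      intro N N' h x hx
      exact lt_of_lt_of_le hx (birkMax_mono ψ h x)
    have hsub : A ⊆ ⋃ N, EN N := by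
      intro x hx
      obtain ⟨q, hq, hF⟩ := (hAmem x).1 hx
      rw [hFmem] at hF
      obtain ⟨n, hn1, hn2⟩ := hF 1
      have : 0 < S n x := lt_trans (by positivity) hn2
      exact mem_iUnion.2 ⟨n, lt_of_lt_of_le this (birkhoffSum_le_birkMax ψ le_rfl x)⟩
    have hU1 : ν (⋃ N, EN N) = 1 := by
      refine le_antisymm prob_le_one ?_
      rw [← hνA]
      exact measure_mono hsub
    have htends := tendsto_setIntegral_of_monotone hENmeas hENmono hψint.integrableOn
    have hlim : 0 ≤ ∫ x in (⋃ N, EN N), ψ x ∂ν :=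
      le_of_tendsto_of_tendsto tendsto_const_nhds htends
        (Eventually.of_forall fun N => maximal_ergodic hpres hψm hK' N)
    have hUc : ν (⋃ N, EN N)ᶜ = 0 := by
      have := measure_compl (MeasurableSet.iUnion hENmeas) (measure_ne_top ν _)
      rw [hU1, measure_univ] at this
      simpa using this
    have hfull : ∫ x in (⋃ N, EN N), ψ x ∂ν = ∫ x, ψ x ∂ν := by
      have h1 : ∫ x in (⋃ N, EN N), ψ x ∂ν + ∫ x in (⋃ N, EN N)ᶜ, ψ x ∂ν = ∫ x, ψ x ∂ν :=
        integral_add_compl (MeasurableSet.iUnion hENmeas) hψint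
      have h2 : ∫ x in (⋃ N, EN N)ᶜ, ψ x ∂ν = 0 := by
        rw [Measure.restrict_eq_zero.mpr hUc]
        exact integral_zero_measure _
      linarith
    rw [hfull] at hlim
    linarith

end UB


/-- The (topological) support of a Borel measure on `ℝ`. -/
def measureSupport (ν : MeasureTheory.Measure ℝ) : Set ℝ :=
  {y | ∀ U : Set ℝ, IsOpen U → y ∈ U → 0 < ν U}

lemma measureSupport_ae (ν : Measure ℝ) : ∀ᵐ x ∂ν, x ∈ measureSupport ν := by
  set S : Set (Set ℝ) := {U | IsOpen U ∧ ν U = 0} with hS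
  obtain ⟨T, hTc, hTS, hTU⟩ := TopologicalSpace.isOpen_sUnion_countable S (fun s hs => hs.1)
  have hT0 : ν (⋃₀ T) = 0 := by
    rw [sUnion_eq_biUnion]
    refine (measure_biUnion_null_iff hTc).2 ?_
    exact fun s hs => (hTS hs).2
  have hsub : {x : ℝ | x ∉ measureSupport ν} ⊆ ⋃₀ T := by
    intro x hx
    simp only [measureSupport, mem_setOf_eq, not_forall] at hx
    obtain ⟨U, hU, hxU, hνU⟩ := hx
    have hνU0 : ν U = 0 := by
      by_contra h
      exact hνU (lt_of_le_of_ne zero_le (Ne.symm h))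
    rw [hTU]
    exact ⟨U, ⟨hU, hνU0⟩, hxU⟩
  rw [ae_iff]
  exact measure_mono_null hsub hT0


set_option maxHeartbeats 1000000 in
/-- For a continuously differentiable interval map `f`, an ergodic invariant
probability measure `ν` with finite non-negative Lyapunov exponent `χ_ν(f) = ∫ ln|Df| dν`,
and assuming `|Df(x)| ≤ C₀ dist(x, Crit f)`, for every `ε > 0` there is a point `x` in the
support of `ν` such that for all sufficiently large `n`,
`f^n(B(x, exp(-(χ_ν + 2ε)n))) ⊆ B(f^n(x), exp(-εn))`. -/
theorem exponentially_small_disk_estimate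
    (a b : ℝ) (hab : a < b) (f : ℝ → ℝ)
    (hf : ContDiff ℝ 1 f) (hmaps : MapsTo f (Icc a b) (Icc a b))
    (ν : Measure ℝ) (hprob : IsProbabilityMeasure ν) (hsupp : ν (Icc a b)ᶜ = 0)
    (herg : Ergodic f ν)
    (hint : Integrable (fun x => Real.log |deriv f x|) ν)
    (χ : ℝ) (hχdef : χ = ∫ x, Real.log |deriv f x| ∂ν) (hχ : 0 ≤ χ)
    (C₀ : ℝ) (hC₀ : 0 < C₀)
    (hbound : ∀ x ∈ Icc a b, |deriv f x| ≤ C₀ * Metric.infDist x {y | deriv f y = 0}) :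
    ∀ ε > (0 : ℝ), ∃ x ∈ measureSupport ν, ∃ N : ℕ, ∀ n : ℕ, N ≤ n →
      f^[n] '' Metric.ball x (Real.exp (-(χ + 2 * ε) * n)) ⊆
        Metric.ball (f^[n] x) (Real.exp (-ε * n)) := by
  intro ε hε
  have hνf : MeasurePreserving f ν ν := herg.toMeasurePreserving
  have hfm : Measurable f := hνf.measurable
  have hdc : Continuous (deriv f) := hf.continuous_deriv le_rfl
  have hdiff : Differentiable ℝ f := hf.differentiable one_ne_zero
  -- global bound on |f'| over the fattened interval
  obtain ⟨M0, hM0⟩ := isCompact_Icc.exists_bound_of_continuousOn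
    (s := Icc (a-1) (b+1)) hdc.continuousOn
  set M : ℝ := max M0 0 with hMdef
  have hM : ∀ y ∈ Icc (a-1) (b+1), |deriv f y| ≤ M := by
    intro y hy
    exact le_trans (by simpa [Real.norm_eq_abs] using hM0 y hy) (le_max_left _ _)
  have hMpos : 0 ≤ M := le_max_right _ _
  have hIccsub : Icc a b ⊆ Icc (a-1) (b+1) := Icc_subset_Icc (by linarith) (by linarith)
  have hae_Icc : ∀ᵐ x ∂ν, x ∈ Icc a b := by
    rw [ae_iff]
    exact hsupp
  -- the approximating log-derivative functions
  set cm : ℕ → ℝ := fun m => 1/((m:ℝ)+2) with hcm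
  set Am : ℕ → ℝ := fun m => (m:ℝ)+2 with hAm
  have hcm_pos : ∀ m, 0 < cm m := by intro m; positivity
  have hcm_le1 : ∀ m, cm m ≤ 1 := by
    intro m
    rw [hcm]
    rw [div_le_one (by positivity)]
    linarith [Nat.cast_nonneg (α := ℝ) m]
  set gm : ℕ → ℝ → ℝ := fun m x =>
    max (min (Real.log (|deriv f x| + cm m)) (Real.log (M + cm m))) (-(Am m)) with hgm
  have hgm_meas : ∀ m, Measurable (gm m) := by
    intro m
    apply Measurable.max _ measurable_const
    apply Measurable.min _ measurable_const
    exact (Real.measurable_log.comp ((hdc.measurable.abs).add_const (cm m)))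
  set u : ℕ → ℝ → ℝ := fun m x => max (gm m x - Real.log |deriv f x|) 0 with hu
  have hlogd_meas : Measurable (fun x => Real.log |deriv f x|) :=
    Real.measurable_log.comp hdc.measurable.abs
  have hu_meas : ∀ m, Measurable (u m) := by
    intro m
    exact ((hgm_meas m).sub hlogd_meas).max measurable_const
  set hstar : ℝ → ℝ := fun x =>
    max (Real.log (|deriv f x| + 1)) 0 + abs (Real.log (abs (deriv f x))) with hhstar
  have hstar_meas : Measurable hstar :=
    ((Real.measurable_log.comp (hdc.measurable.abs.add_const 1)).max measurable_const).add
      hlogd_meas.abs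
  have h1int : Integrable (fun x => max (Real.log (|deriv f x| + 1)) 0) ν := by
    refine Integrable.mono' (integrable_const (max (Real.log (M + 1)) 0))
      ((Real.measurable_log.comp (hdc.measurable.abs.add_const 1)).max
        measurable_const).aestronglyMeasurable ?_
    filter_upwards [hae_Icc] with x hx
    rw [Real.norm_eq_abs, abs_of_nonneg (le_max_right _ _)]
    refine max_le_max ?_ le_rfl
    refine Real.log_le_log (by positivity) ?_
    linarith [hM x (hIccsub hx)]
  have hstar_int : Integrable hstar ν := h1int.add hint.abs
  have hgm_le : ∀ m x, gm m x ≤ max (Real.log (|deriv f x| + 1)) 0 := by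
    intro m x
    apply max_le
    · refine le_trans (min_le_left _ _) (le_trans ?_ (le_max_left _ _))
      exact Real.log_le_log (by linarith [abs_nonneg (deriv f x), hcm_pos m])
        (by linarith [hcm_le1 m])
    · refine le_trans ?_ (le_max_right _ _)
      have : (0:ℝ) ≤ Am m := by rw [hAm]; positivity
      linarith
  have hu_nonneg : ∀ m x, 0 ≤ u m x := fun m x => le_max_right _ _
  have hu_le : ∀ m x, u m x ≤ hstar x := by
    intro m x
    rw [hu, hhstar]
    simp only []
    apply max_le
    · have h1 := hgm_le m x
      have h2 : -Real.log |deriv f x| ≤ abs (Real.log (abs (deriv f x))) := neg_le_abs _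
      linarith
    · positivity
  have hu_int : ∀ m, Integrable (u m) ν := by
    intro m
    refine Integrable.mono' hstar_int (hu_meas m).aestronglyMeasurable ?_
    exact Eventually.of_forall fun x => by
      rw [Real.norm_eq_abs, abs_of_nonneg (hu_nonneg m x)]; exact hu_le m x
  -- pointwise a.e. convergence of u m to 0
  have hcm_tendsto : Tendsto (fun m : ℕ => cm m) atTop (nhds 0) := by
    have h1 := (tendsto_one_div_add_atTop_nhds_zero_nat (𝕜 := ℝ)).comp (tendsto_add_atTop_nat 1)
    rw [hcm]
    convert h1 using 2 with m
    simp only [Function.comp_apply]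
    push_cast
    ring
  have hAm_ev : ∀ (t : ℝ), ∀ᶠ m : ℕ in atTop, -(Am m) ≤ t := by
    intro t
    obtain ⟨m₀, hm₀⟩ := exists_nat_ge (-t)
    refine eventually_atTop.2 ⟨m₀, fun m hm => ?_⟩
    have h1 : (m₀:ℝ) ≤ m := by exact_mod_cast hm
    have h2 : Am m = (m:ℝ)+2 := by rw [hAm]
    rw [h2]
    linarith
  have hu_tendsto : ∀ᵐ x ∂ν, Tendsto (fun m => u m x) atTop (nhds 0) := by
    filter_upwards [hae_Icc] with x hx
    by_cases hx0 : deriv f x = 0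
    · -- u m x = 0 for all m
      have hzero : ∀ m, u m x = 0 := by
        intro m
        have hgmx : gm m x = max (min (Real.log (cm m)) (Real.log (M + cm m))) (-(Am m)) := by
          rw [hgm]; simp [hx0]
        have hmin : min (Real.log (cm m)) (Real.log (M + cm m)) = Real.log (cm m) :=
          min_eq_left (Real.log_le_log (hcm_pos m) (by linarith [hcm_pos m, hMpos]))
        have hneg : gm m x ≤ 0 := by
          rw [hgmx, hmin]
          apply max_le
          · exact Real.log_nonpos (le_of_lt (hcm_pos m)) (hcm_le1 m)
          · have : (0:ℝ) ≤ Am m := by rw [hAm]; positivity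
            linarith
        rw [hu]
        simp only [hx0, abs_zero, Real.log_zero, sub_zero]
        exact max_eq_right hneg
      simpa [hzero] using (tendsto_const_nhds : Tendsto (fun _ : ℕ => (0:ℝ)) atTop (nhds 0))
    · -- deriv f x ≠ 0
      have habs : 0 < |deriv f x| := abs_pos.2 hx0
      have hMx : |deriv f x| ≤ M := hM x (hIccsub hx)
      have hgmx : ∀ m, gm m x = max (Real.log (|deriv f x| + cm m)) (-(Am m)) := by
        intro m
        rw [hgm]
        simp only []
        rw [min_eq_left (Real.log_le_log (by linarith [hcm_pos m]) (by linarith [hcm_pos m]))]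
      have h1 : Tendsto (fun m : ℕ => |deriv f x| + cm m) atTop (nhds (|deriv f x|)) := by
        simpa using (tendsto_const_nhds.add hcm_tendsto :
          Tendsto (fun m : ℕ => |deriv f x| + cm m) atTop (nhds (|deriv f x| + 0)))
      have hL : Tendsto (fun m => Real.log (|deriv f x| + cm m)) atTop
          (nhds (Real.log (|deriv f x|))) :=
        ((Real.continuousAt_log habs.ne').tendsto).comp h1
      have hEv : ∀ᶠ m : ℕ in atTop, gm m x = Real.log (|deriv f x| + cm m) := by
        filter_upwards [hAm_ev (Real.log (|deriv f x|))] with m hm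
        rw [hgmx m]
        apply max_eq_left
        exact le_trans hm (Real.log_le_log habs (by linarith [hcm_pos m]))
      have hgm_tendsto : Tendsto (fun m => gm m x) atTop (nhds (Real.log (|deriv f x|))) :=
        hL.congr' (hEv.mono fun m h => h.symm)
      have h2 : Tendsto (fun m => gm m x - Real.log (|deriv f x|)) atTop (nhds 0) := by
        simpa using hgm_tendsto.sub_const (Real.log (|deriv f x|))
      have h3 := h2.max (tendsto_const_nhds : Tendsto (fun _ : ℕ => (0:ℝ)) atTop (nhds 0))
      rw [max_self] at h3
      simpa [hu] using h3
  -- dominated convergence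
  have hDCT : Tendsto (fun m => ∫ x, u m x ∂ν) atTop (nhds (∫ x, (0:ℝ) ∂ν)) := by
    refine tendsto_integral_of_dominated_convergence hstar
      (fun m => (hu_meas m).aestronglyMeasurable) hstar_int ?_ ?_
    · intro m
      exact Eventually.of_forall fun x => by
        rw [Real.norm_eq_abs, abs_of_nonneg (hu_nonneg m x)]; exact hu_le m x
    · exact hu_tendsto
  rw [integral_zero] at hDCT
  -- choose m₁ with small integral
  have hquarter : (0:ℝ) < ε/4 := by linarith
  obtain ⟨m₁, hm₁⟩ := (hDCT.eventually_lt_const hquarter).exists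
  have hum₁ : ∫ x, u m₁ x ∂ν < ε/4 := hm₁
  set c : ℝ := cm m₁ with hcdef
  set A : ℝ := Am m₁ with hAdef
  have hcpos : 0 < c := hcm_pos m₁
  have hcle1 : c ≤ 1 := hcm_le1 m₁
  have hApos : 0 < A := by rw [hAdef, hAm]; positivity
  set g : ℝ → ℝ := gm m₁ with hgdef
  have hg_meas : Measurable g := hgm_meas m₁
  have hg_eq : ∀ x, g x = max (min (Real.log (|deriv f x| + c)) (Real.log (M + c))) (-A) := by
    intro x; rw [hgdef, hgm]
  -- uniform bound on g
  set Kg : ℝ := A + |Real.log (M + c)| with hKg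
  have hKg_pos : 0 < Kg := by
    rw [hKg]; have := abs_nonneg (Real.log (M + c)); linarith
  have hg_bdd : ∀ x, |g x| ≤ Kg := by
    intro x
    rw [abs_le, hg_eq x]
    constructor
    · refine le_trans ?_ (le_max_right _ _)
      rw [hKg]; have := abs_nonneg (Real.log (M + c)); linarith
    · apply max_le
      · refine le_trans (min_le_right _ _) ?_
        rw [hKg]
        have := le_abs_self (Real.log (M + c))
        linarith
      · rw [hKg]; have := abs_nonneg (Real.log (M + c)); linarith
  have hg_int : Integrable g ν :=
    Integrable.mono' (integrable_const Kg) hg_meas.aestronglyMeasurable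
      (Eventually.of_forall fun x => by rw [Real.norm_eq_abs]; exact hg_bdd x)
  -- ∫ g ≤ χ + ε/4
  have hg_le_int : ∫ x, g x ∂ν < χ + ε/4 := by
    have hptw : ∀ x, g x ≤ Real.log |deriv f x| + u m₁ x := by
      intro x
      have : g x - Real.log |deriv f x| ≤ u m₁ x := by
        rw [hu, hgdef]; exact le_max_left _ _
      linarith
    have h1 : ∫ x, g x ∂ν ≤ ∫ x, (Real.log |deriv f x| + u m₁ x) ∂ν :=
      integral_mono hg_int (hint.add (hu_int m₁)) hptw
    rw [integral_add hint (hu_int m₁)] at h1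
    rw [← hχdef] at h1
    linarith
  -- uniform continuity radius ρ
  have hucont : UniformContinuousOn (deriv f) (Icc (a-1) (b+1)) :=
    isCompact_Icc.uniformContinuousOn_of_continuous hdc.continuousOn
  obtain ⟨ρ₀, hρ₀pos, hρ₀⟩ := (Metric.uniformContinuousOn_iff).1 hucont c hcpos
  set ρ : ℝ := min ρ₀ 1 with hρdef
  have hρpos : 0 < ρ := lt_min hρ₀pos one_pos
  have hρle1 : ρ ≤ 1 := min_le_right _ _
  have hρleρ₀ : ρ ≤ ρ₀ := min_le_left _ _
  -- derivative bound on small balls around points of [a,b]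
  have hderiv_ball : ∀ p ∈ Icc a b, ∀ y : ℝ, dist y p < ρ → |deriv f y| ≤ Real.exp (g p) := by
    intro p hp y hy
    have hpK : p ∈ Icc (a-1) (b+1) := hIccsub hp
    have hyK : y ∈ Icc (a-1) (b+1) := by
      rw [Real.dist_eq, abs_lt] at hy
      constructor
      · have := hp.1; linarith [hρle1]
      · have := hp.2; linarith [hρle1]
    have hclose : dist (deriv f y) (deriv f p) < c :=
      hρ₀ y hyK p hpK (lt_of_lt_of_le hy hρleρ₀)
    rw [Real.dist_eq] at hclose
    have h1 : |deriv f y| ≤ |deriv f p| + c := by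
      have := abs_sub_abs_le_abs_sub (deriv f y) (deriv f p)
      linarith [le_of_lt hclose, le_abs_self (deriv f y - deriv f p)]
    have h2 : |deriv f p| + c ≤ Real.exp (g p) := by
      have hgp : Real.log (|deriv f p| + c) ≤ g p := by
        rw [hg_eq p]
        refine le_trans ?_ (le_max_left _ _)
        rw [min_eq_left]
        exact Real.log_le_log (by linarith [abs_nonneg (deriv f p)])
          (by linarith [hM p hpK])
      calc |deriv f p| + c = Real.exp (Real.log (|deriv f p| + c)) :=
            (Real.exp_log (by linarith [abs_nonneg (deriv f p)])).symm
        _ ≤ Real.exp (g p) := Real.exp_le_exp.2 hgp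
    linarith
  -- MVT estimate on small balls
  have hMVT : ∀ p ∈ Icc a b, ∀ z ∈ ball p ρ, ∀ w ∈ ball p ρ,
      |f z - f w| ≤ Real.exp (g p) * |z - w| := by
    intro p hp z hz w hw
    have := Convex.norm_image_sub_le_of_norm_deriv_le
      (f := f) (s := ball p ρ)
      (fun y _ => hdiff.differentiableAt)
      (fun y hy => by rw [Real.norm_eq_abs]; exact hderiv_ball p hp y (mem_ball.1 hy))
      (convex_ball p ρ) hw hz
    simpa [Real.norm_eq_abs] using this
  -- Birkhoff upper bound for g
  have hBirk : ∀ᵐ x ∂ν, ∃ N₀ : ℕ, ∀ n, N₀ ≤ n →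
      birkhoffSum f g n x ≤ (χ + ε/2) * n :=
    birkhoff_upper herg hg_meas hg_bdd (by linarith : ∫ x, g x ∂ν < χ + ε/2)
  -- a.e. orbit stays in [a,b]
  have horb : ∀ᵐ x ∂ν, ∀ k : ℕ, f^[k] x ∈ Icc a b := by
    rw [ae_all_iff]
    intro k
    rw [ae_iff]
    have hpre : {x : ℝ | ¬ f^[k] x ∈ Icc a b} = f^[k] ⁻¹' (Icc a b)ᶜ := rfl
    rw [hpre, (hνf.iterate k).measure_preimage measurableSet_Icc.compl.nullMeasurableSet]
    exact hsupp
  have hsupp_ae : ∀ᵐ x ∂ν, x ∈ measureSupport ν := measureSupport_ae ν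
  -- pick a good point x
  have hν_ne : ν ≠ 0 := hprob.ne_zero
  haveI : (ae ν).NeBot := ae_neBot.2 hν_ne
  obtain ⟨x, hxBirk, hxorb, hxsupp⟩ := (hBirk.and (horb.and hsupp_ae)).exists
  obtain ⟨hxorb, hxsupp⟩ := And.intro hxorb hxsupp
  obtain ⟨N₀, hN₀⟩ := hxBirk
  refine ⟨x, hxsupp, ?_⟩
  -- constants
  set C₁ : ℝ := (N₀ : ℝ) * Kg with hC₁
  have hC₁pos : 0 ≤ C₁ := by rw [hC₁]; positivity
  have hS_bound : ∀ k : ℕ, birkhoffSum f g k x ≤ C₁ + (χ + ε/2) * k := by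
    intro k
    rcases le_or_gt N₀ k with hk | hk
    · have := hN₀ k hk
      linarith
    · have h1 : birkhoffSum f g k x ≤ Kg * k :=
        le_trans (le_abs_self _) (abs_birkhoffSum_le g hg_bdd k x)
      have h2 : Kg * k ≤ C₁ := by
        rw [hC₁]
        have : (k:ℝ) ≤ N₀ := by exact_mod_cast le_of_lt hk
        nlinarith [hKg_pos]
      have h3 : 0 ≤ (χ + ε/2) * k := by positivity
      linarith
  -- choose N
  obtain ⟨N, hN⟩ := exists_nat_gt ((C₁ + 1 + |Real.log ρ|) / (ε/2))
  refine ⟨N, ?_⟩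
  intro n hn
  have hεn : C₁ + 1 + |Real.log ρ| < (ε/2) * n := by
    rw [div_lt_iff₀ (by linarith : (0:ℝ) < ε/2)] at hN
    have hcast : (N:ℝ) ≤ n := by exact_mod_cast hn
    have h2 : (ε/2) * N ≤ (ε/2) * n := mul_le_mul_of_nonneg_left hcast (by linarith)
    linarith
  set r : ℝ := Real.exp (-(χ + 2*ε) * n) with hr
  have hrpos : 0 < r := Real.exp_pos _
  -- uniform bound on the radii along the orbit
  have hRk : ∀ k : ℕ, k ≤ n → r * Real.exp (birkhoffSum f g k x)
      ≤ Real.exp (C₁ - (3/2)*ε*n) := by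
    intro k hk
    rw [hr, ← Real.exp_add, Real.exp_le_exp]
    have h1 := hS_bound k
    have hkn : (k:ℝ) ≤ n := by exact_mod_cast hk
    have h2 : (χ + ε/2) * k ≤ (χ + ε/2) * n :=
      mul_le_mul_of_nonneg_left hkn (by linarith)
    linarith
  have hρbig : Real.exp (C₁ - (3/2)*ε*n) ≤ ρ := by
    rw [← Real.exp_log hρpos, Real.exp_le_exp]
    have h1 : -|Real.log ρ| ≤ Real.log ρ := neg_abs_le _
    have h2 : 0 ≤ ε * n := by positivity
    linarith [abs_nonneg (Real.log ρ)]
  have hfinal : Real.exp (C₁ - (3/2)*ε*n) < Real.exp (-ε * n) := by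
    rw [Real.exp_lt_exp]
    linarith [abs_nonneg (Real.log ρ)]
  -- induction along the orbit
  have key : ∀ k : ℕ, k ≤ n → ∀ y ∈ ball x r,
      |f^[k] y - f^[k] x| < r * Real.exp (birkhoffSum f g k x) := by
    intro k
    induction k with
    | zero =>
      intro _ y hy
      rw [mem_ball, Real.dist_eq] at hy
      simpa [birkhoffSum_zero, Real.exp_zero] using hy
    | succ k ih =>
      intro hk y hy
      have hk' : k ≤ n := Nat.le_of_succ_le hk
      have hprev := ih hk' y hy
      have hp : f^[k] x ∈ Icc a b := hxorb k
      have hrad : r * Real.exp (birkhoffSum f g k x) ≤ ρ :=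
        le_trans (hRk k hk') hρbig
      have hz : f^[k] y ∈ ball (f^[k] x) ρ := by
        rw [mem_ball, Real.dist_eq]
        exact lt_of_lt_of_le hprev hrad
      have hcenter : f^[k] x ∈ ball (f^[k] x) ρ := mem_ball_self hρpos
      have hstep := hMVT (f^[k] x) hp (f^[k] y) hz (f^[k] x) hcenter
      rw [Function.iterate_succ_apply', Function.iterate_succ_apply']
      calc |f (f^[k] y) - f (f^[k] x)|
          ≤ Real.exp (g (f^[k] x)) * |f^[k] y - f^[k] x| := hstep
        _ < Real.exp (g (f^[k] x)) * (r * Real.exp (birkhoffSum f g k x)) := by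
            exact mul_lt_mul_of_pos_left hprev (Real.exp_pos _)
        _ = r * Real.exp (birkhoffSum f g (k+1) x) := by
            rw [birkhoffSum_succ, Real.exp_add]
            ring
  -- conclusion
  rintro z ⟨y, hy, rfl⟩
  rw [mem_ball, Real.dist_eq]
  calc |f^[n] y - f^[n] x| < r * Real.exp (birkhoffSum f g n x) := key n le_rfl y hy
    _ ≤ Real.exp (C₁ - (3/2)*ε*n) := hRk n le_rfl
    _ < Real.exp (-ε * n) := hfinal
end
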